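/- arXiv:1303.0070 — 9 statements merged into one kernel-verified Lean document; each statement's English description precedes it below -/
import Mathlib

section
/- Let C be a k-dimensional subspace of F^n satisfying A_i(C) < n · q^{-(n-k)} · binom(n,i)(q-1)^i for all 1 ≤ i ≤ n, and let S ⊆ F^n with 0 ∈ S and |S| < q^{n-k}/(2n). Then there exist a monomial map f of F^n and a subset B ⊆ S such that: (1) 0 ∈ B; (2) |B| > |S|·(1 − 2n·q^{-(n-k)}·|S|); (3) the sets {c + f(B) : c ∈ C} are pairwise disjoint. -/
/-- A monomial map of `F^n`, determined by a permutation `σ` of the coordinates and a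
vector `v` of (intended to be nonzero) scaling factors:
`x ↦ (v_1·x_{σ⁻¹(1)}, …, v_n·x_{σ⁻¹(n)})`. -/
def monomialMap {F : Type*} [Mul F] {n : ℕ} (σ : Equiv.Perm (Fin n)) (v : Fin n → F)
    (x : Fin n → F) : Fin n → F :=
  fun i => v i * x (σ.symm i)

set_option linter.unusedSectionVars false
set_option linter.unusedVariables false
set_option maxHeartbeats 1600000

section Aux
variable {F : Type*} [Field F] [Fintype F] [DecidableEq F] {n : ℕ}

lemma monomialMap_sub (σ : Equiv.Perm (Fin n)) (v : Fin n → F) (x y : Fin n → F) :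
    monomialMap σ v (x - y) = monomialMap σ v x - monomialMap σ v y := by
  funext i; simp [monomialMap, mul_sub]

lemma monomialMap_zero (σ : Equiv.Perm (Fin n)) (v : Fin n → F) :
    monomialMap σ v (0 : Fin n → F) = 0 := by
  funext i; simp [monomialMap]

lemma hammingNorm_monomialMap (σ : Equiv.Perm (Fin n)) (v : Fin n → Fˣ) (x : Fin n → F) :
    hammingNorm (monomialMap σ (fun i => (v i : F)) x) = hammingNorm x := by
  classical
  simp only [hammingNorm, monomialMap]
  erw [show (Finset.filter (fun i => (v i : F) * x (σ.symm i) ≠ 0) Finset.univ)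
      = Finset.filter (fun i => x (σ.symm i) ≠ 0) Finset.univ from by
    ext i; simp [Units.mul_right_eq_zero]]
  exact Finset.card_bij (fun i _ => σ.symm i)
    (fun a ha => by simpa using ha)
    (fun a _ b _ h => by simpa using h)
    (fun b hb => ⟨σ b, by simpa using hb, by simp⟩)


lemma count_fixed (d c : Fin n → F) {w : ℕ} (hd : hammingNorm d = w) (hc : hammingNorm c = w) :
    (Finset.univ.filter (fun ω : Equiv.Perm (Fin n) × (Fin n → Fˣ) =>
        monomialMap ω.1 (fun i => ((ω.2 i : F))) d = c)).card
      ≤ w.factorial * (n - w).factorial * (Fintype.card F - 1) ^ (n - w) := by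
  classical
  have hcd : Fintype.card {i : Fin n // d i ≠ 0} = w := by
    rw [Fintype.card_subtype]; exact hd
  have hcc : Fintype.card {i : Fin n // c i ≠ 0} = w := by
    rw [Fintype.card_subtype]; exact hc
  have hcd' : Fintype.card {i : Fin n // ¬ d i ≠ 0} = n - w := by
    rw [Fintype.card_subtype_compl, hcd]; simp
  have hcc' : Fintype.card {i : Fin n // ¬ c i ≠ 0} = n - w := by
    rw [Fintype.card_subtype_compl, hcc]; simp
  -- the key per-ω fact
  have key : ∀ ω : Equiv.Perm (Fin n) × (Fin n → Fˣ),
      monomialMap ω.1 (fun i => ((ω.2 i : F))) d = c →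
      ∀ j : Fin n, (d j ≠ 0 ↔ c (ω.1 j) ≠ 0) := by
    intro ω hω j
    have h1 : (ω.2 (ω.1 j) : F) * d j = c (ω.1 j) := by
      have := congrFun hω (ω.1 j)
      simpa [monomialMap] using this
    rw [← h1]
    simp [Units.mul_right_eq_zero]
  -- injection
  rw [← Fintype.card_subtype]
  let T := ({i : Fin n // d i ≠ 0} ↪ {i : Fin n // c i ≠ 0}) ×
      ({i : Fin n // ¬ d i ≠ 0} ↪ {i : Fin n // ¬ c i ≠ 0}) × ({i : Fin n // ¬ c i ≠ 0} → Fˣ)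
  have hT : Fintype.card T = w.factorial * (n - w).factorial * (Fintype.card F - 1) ^ (n - w) := by
    simp only [T, Fintype.card_prod, Fintype.card_fun, Fintype.card_embedding_eq, hcd, hcc,
      hcd', hcc', Nat.descFactorial_self, Fintype.card_units, mul_assoc]
  rw [← hT]
  refine Fintype.card_le_of_injective (fun ω =>
    ((⟨fun j => ⟨ω.1.1 j, (key ω.1 ω.2 j.1).mp j.2⟩, fun a b hab => by
        apply Subtype.ext
        exact ω.1.1.injective (congrArg Subtype.val hab)⟩,
     ⟨fun j => ⟨ω.1.1 j, fun h => j.2 ((key ω.1 ω.2 j.1).mpr h)⟩, fun a b hab => by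
        apply Subtype.ext
        exact ω.1.1.injective (congrArg Subtype.val hab)⟩,
     fun i => ω.1.2 i.1) : T)) ?_
  rintro ⟨⟨σ₁, v₁⟩, h₁⟩ ⟨⟨σ₂, v₂⟩, h₂⟩ h
  have ha := congrArg Prod.fst h
  have hb := congrArg (fun t : T => t.2.1) h
  have hv := congrArg (fun t : T => t.2.2) h
  simp only at ha hb hv
  have hσ : σ₁ = σ₂ := by
    ext j
    by_cases hdj : d j ≠ 0
    · exact congrArg Fin.val (by exact congrArg Subtype.val (DFunLike.congr_fun ha ⟨j, hdj⟩))
    · exact congrArg Fin.val (by exact congrArg Subtype.val (DFunLike.congr_fun hb ⟨j, hdj⟩))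
  have hvv : v₁ = v₂ := by
    funext i
    by_cases hci : c i ≠ 0
    · have e₁ : (v₁ i : F) * d (σ₁.symm i) = c i := by
        simpa [monomialMap] using congrFun h₁ i
      have e₂ : (v₂ i : F) * d (σ₂.symm i) = c i := by
        simpa [monomialMap] using congrFun h₂ i
      rw [← hσ] at e₂
      have hd0 : d (σ₁.symm i) ≠ 0 := by
        refine (key (σ₁, v₁) h₁ (σ₁.symm i)).mpr ?_
        simpa using hci
      exact Units.ext (mul_right_cancel₀ hd0 (e₁.trans e₂.symm))
    · exact congrFun hv ⟨i, hci⟩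
  exact Subtype.ext (Prod.ext hσ hvv)
end Aux

/-- Let `C` be a `k`-dimensional subspace of `F^n` satisfying
`A_i(C) < n · q^{-(n-k)} · binom(n,i)(q-1)^i` for all `1 ≤ i ≤ n`, and let `S ⊆ F^n` with
`0 ∈ S` and `|S| < q^{n-k}/(2n)`. Then there exist a monomial map `f` of `F^n` and a subset
`B ⊆ S` such that: (1) `0 ∈ B`; (2) `|B| > |S|·(1 − 2n·q^{-(n-k)}·|S|)`;
(3) the sets `{c + f(B) : c ∈ C}` are pairwise disjoint. -/
theorem universal_packing_of_white_code
    (F : Type*) [Field F] [Fintype F] [DecidableEq F] (q n k : ℕ)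
    (hq : Fintype.card F = q) (hk : 1 ≤ k) (hkn : k ≤ n)
    (C : Submodule F (Fin n → F)) (hC : Module.finrank F C = k)
    (hwd : ∀ i : ℕ, 1 ≤ i → i ≤ n →
      (({x : Fin n → F | x ∈ C ∧ hammingNorm x = i}.ncard : ℝ)) <
        (n : ℝ) * ((n.choose i * (q - 1) ^ i : ℕ) : ℝ) / (q : ℝ) ^ (n - k))
    (S : Set (Fin n → F)) (h0S : (0 : Fin n → F) ∈ S)
    (hS : (S.ncard : ℝ) < (q : ℝ) ^ (n - k) / (2 * n)) :
    ∃ (σ : Equiv.Perm (Fin n)) (v : Fin n → F), (∀ i, v i ≠ 0) ∧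
      ∃ B ⊆ S, (0 : Fin n → F) ∈ B ∧
        (B.ncard : ℝ) > (S.ncard : ℝ) * (1 - 2 * n * (S.ncard : ℝ) / (q : ℝ) ^ (n - k)) ∧
        (C : Set (Fin n → F)).Pairwise (fun c₁ c₂ =>
          Disjoint ((fun b => c₁ + b) '' (monomialMap σ v '' B))
            ((fun b => c₂ + b) '' (monomialMap σ v '' B))) := by
  classical
  have hn : 1 ≤ n := hk.trans hkn
  have hq2 : 2 ≤ q := by rw [← hq]; exact Fintype.one_lt_card
  have hq0 : (0:ℝ) < (q : ℝ) ^ (n - k) := by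
    have : 0 < q := by omega
    positivity
  set W := Equiv.Perm (Fin n) × (Fin n → Fˣ) with hWdef
  let fm : W → (Fin n → F) → (Fin n → F) := fun ω => monomialMap ω.1 (fun i => ((ω.2 i : F)))
  have hcardW : Fintype.card W = n.factorial * (q - 1) ^ n := by
    simp [hWdef, Fintype.card_prod, Fintype.card_perm, Fintype.card_fun, Fintype.card_units, hq]
  have hWpos : (0:ℝ) < (Fintype.card W : ℝ) := by
    have := Fintype.card_pos (α := W)
    exact_mod_cast this
  -- per-vector bound
  have keyd : ∀ d : Fin n → F, d ≠ 0 →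
      ((Finset.univ.filter fun ω : W => fm ω d ∈ C).card : ℝ) <
        (Fintype.card W : ℝ) * n / (q : ℝ) ^ (n - k) := by
    intro d hd0
    set w := hammingNorm d with hw
    have hw1 : 1 ≤ w := Nat.one_le_iff_ne_zero.2 (hammingNorm_ne_zero_iff.2 hd0)
    have hwn : w ≤ n := by rw [hw]; simpa using hammingNorm_le_card_fintype (x := d)
    set Cw : Finset (Fin n → F) := Finset.univ.filter (fun c => c ∈ C ∧ hammingNorm c = w)
      with hCw
    have h1 : (Finset.univ.filter fun ω : W => fm ω d ∈ C).card ≤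
        Cw.card * (w.factorial * (n - w).factorial * (q - 1) ^ (n - w)) := by
      have hsub : (Finset.univ.filter fun ω : W => fm ω d ∈ C) ⊆
          Cw.biUnion (fun c => Finset.univ.filter fun ω : W => fm ω d = c) := by
        intro ω hω
        simp only [Finset.mem_filter, Finset.mem_univ, true_and] at hω
        refine Finset.mem_biUnion.2 ⟨fm ω d, ?_, ?_⟩
        · simp only [hCw, Finset.mem_filter, Finset.mem_univ, true_and]
          exact ⟨hω, hammingNorm_monomialMap _ _ _⟩
        · simp
      calc (Finset.univ.filter fun ω : W => fm ω d ∈ C).card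
          ≤ (Cw.biUnion (fun c => Finset.univ.filter fun ω : W => fm ω d = c)).card :=
            Finset.card_le_card hsub
        _ ≤ ∑ c ∈ Cw, (Finset.univ.filter fun ω : W => fm ω d = c).card :=
            Finset.card_biUnion_le
        _ ≤ ∑ _c ∈ Cw, (w.factorial * (n - w).factorial * (q - 1) ^ (n - w)) := by
            refine Finset.sum_le_sum ?_
            intro c hc
            simp only [hCw, Finset.mem_filter, Finset.mem_univ, true_and] at hc
            have := count_fixed d c hw.symm hc.2
            rw [hq] at this
            exact this
        _ = Cw.card * (w.factorial * (n - w).factorial * (q - 1) ^ (n - w)) := by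
            rw [Finset.sum_const, smul_eq_mul]
    have h2 : ({x : Fin n → F | x ∈ C ∧ hammingNorm x = w}.ncard : ℝ) = (Cw.card : ℝ) := by
      norm_cast
      rw [show {x : Fin n → F | x ∈ C ∧ hammingNorm x = w} = ↑Cw from by
        ext x; simp [hCw]]
      exact Set.ncard_coe_finset _
    have h3 := hwd w hw1 hwn
    rw [h2] at h3
    have hA : (0:ℝ) < ((w.factorial * (n - w).factorial * (q - 1) ^ (n - w) : ℕ) : ℝ) := by
      have h5 : 0 < q - 1 := by omega
      have : 0 < w.factorial * (n - w).factorial * (q - 1) ^ (n - w) :=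
        Nat.mul_pos (Nat.mul_pos w.factorial_pos (n - w).factorial_pos) (Nat.pow_pos h5)
      exact_mod_cast this
    have hnat : (n.choose w * (q - 1) ^ w) * (w.factorial * (n - w).factorial * (q - 1) ^ (n - w))
        = n.factorial * (q - 1) ^ n := by
      have h4 := Nat.choose_mul_factorial_mul_factorial hwn
      calc (n.choose w * (q - 1) ^ w) * (w.factorial * (n - w).factorial * (q - 1) ^ (n - w))
          = (n.choose w * w.factorial * (n - w).factorial) * ((q - 1) ^ w * (q - 1) ^ (n - w)) := by
            ring
        _ = n.factorial * (q - 1) ^ n := by rw [h4, ← pow_add, Nat.add_sub_cancel' hwn]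
    have hkey : ((n.choose w * (q - 1) ^ w : ℕ) : ℝ) *
        ((w.factorial * (n - w).factorial * (q - 1) ^ (n - w) : ℕ) : ℝ)
        = ((n.factorial * (q - 1) ^ n : ℕ) : ℝ) := by exact_mod_cast hnat
    calc ((Finset.univ.filter fun ω : W => fm ω d ∈ C).card : ℝ)
        ≤ (Cw.card : ℝ) * ((w.factorial * (n - w).factorial * (q - 1) ^ (n - w) : ℕ) : ℝ) := by
          exact_mod_cast h1
      _ < ((n : ℝ) * ((n.choose w * (q - 1) ^ w : ℕ) : ℝ) / (q : ℝ) ^ (n - k)) *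
          ((w.factorial * (n - w).factorial * (q - 1) ^ (n - w) : ℕ) : ℝ) :=
          mul_lt_mul_of_pos_right h3 hA
      _ = (Fintype.card W : ℝ) * n / (q : ℝ) ^ (n - k) := by
          rw [hcardW]
          rw [div_mul_eq_mul_div, mul_assoc, hkey]
          ring
  -- finite model of S
  set Sf : Finset (Fin n → F) := S.toFinset with hSfdef
  have hSf : (Sf.card : ℕ) = S.ncard := (Set.ncard_eq_toFinset_card' S).symm
  have h0Sf : (0 : Fin n → F) ∈ Sf := Set.mem_toFinset.2 h0S
  have hS1 : 1 ≤ S.ncard := by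
    rw [← hSf]; exact Finset.card_pos.2 ⟨0, h0Sf⟩
  -- bad pairs
  set P : W → Finset ((Fin n → F) × (Fin n → F)) := fun ω =>
    Sf.offDiag.filter fun p => fm ω (p.1 - p.2) ∈ C with hPdef
  obtain ⟨ω₀, -, hmin⟩ := Finset.exists_min_image (Finset.univ : Finset W)
    (fun ω => (P ω).card) ⟨((1 : Equiv.Perm (Fin n)), fun _ => (1 : Fˣ)), Finset.mem_univ _⟩
  have hNbound : ((P ω₀).card : ℝ) < 2 * n * (S.ncard : ℝ) ^ 2 / (q : ℝ) ^ (n - k) := by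
    have hrhs0 : (0:ℝ) < 2 * n * (S.ncard : ℝ) ^ 2 / (q : ℝ) ^ (n - k) := by
      have h1 : (0:ℝ) < (n:ℝ) := by exact_mod_cast hn
      have h2 : (0:ℝ) < (S.ncard : ℝ) := by exact_mod_cast hS1
      positivity
    rcases Finset.eq_empty_or_nonempty Sf.offDiag with he | hne
    · have hP0 : (P ω₀).card = 0 := by
        simp [hPdef, he]
      rw [hP0]; exact_mod_cast hrhs0
    · have hsum : ∑ ω : W, (P ω).card =
          ∑ p ∈ Sf.offDiag, (Finset.univ.filter fun ω : W => fm ω (p.1 - p.2) ∈ C).card := by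
        simp only [hPdef, Finset.card_filter]
        exact Finset.sum_comm
      have hlt : (∑ p ∈ Sf.offDiag,
            ((Finset.univ.filter fun ω : W => fm ω (p.1 - p.2) ∈ C).card : ℝ))
          < (Sf.offDiag.card : ℝ) * ((Fintype.card W : ℝ) * n / (q : ℝ) ^ (n - k)) := by
        have := Finset.sum_lt_sum_of_nonempty hne (f := fun p =>
            ((Finset.univ.filter fun ω : W => fm ω (p.1 - p.2) ∈ C).card : ℝ))
          (g := fun _ => (Fintype.card W : ℝ) * n / (q : ℝ) ^ (n - k)) ?_
        · simpa [Finset.sum_const, nsmul_eq_mul] using this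
        · intro p hp
          exact keyd _ (sub_ne_zero.2 (Finset.mem_offDiag.1 hp).2.2)
      have hsum' : (∑ ω : W, ((P ω).card : ℝ)) =
          ∑ p ∈ Sf.offDiag, ((Finset.univ.filter fun ω : W => fm ω (p.1 - p.2) ∈ C).card : ℝ) := by
        exact_mod_cast congrArg (Nat.cast : ℕ → ℝ) hsum
      have hmin' : (Fintype.card W : ℝ) * ((P ω₀).card : ℝ) ≤ ∑ ω : W, ((P ω).card : ℝ) := by
        calc (Fintype.card W : ℝ) * ((P ω₀).card : ℝ)
            = ∑ _ω : W, ((P ω₀).card : ℝ) := by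
              rw [Finset.sum_const, Finset.card_univ, nsmul_eq_mul]
          _ ≤ ∑ ω : W, ((P ω).card : ℝ) := by
              refine Finset.sum_le_sum fun ω _ => ?_
              exact_mod_cast hmin ω (Finset.mem_univ ω)
      have hstep : ((P ω₀).card : ℝ) < (Sf.offDiag.card : ℝ) * ((n : ℝ) / (q : ℝ) ^ (n - k)) := by
        have h6 : (Fintype.card W : ℝ) * ((P ω₀).card : ℝ) <
            (Fintype.card W : ℝ) * ((Sf.offDiag.card : ℝ) * ((n : ℝ) / (q : ℝ) ^ (n - k))) := by
          refine lt_of_le_of_lt (hmin'.trans hsum'.le) ?_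
          calc (∑ p ∈ Sf.offDiag,
                ((Finset.univ.filter fun ω : W => fm ω (p.1 - p.2) ∈ C).card : ℝ))
              < (Sf.offDiag.card : ℝ) * ((Fintype.card W : ℝ) * n / (q : ℝ) ^ (n - k)) := hlt
            _ = (Fintype.card W : ℝ) * ((Sf.offDiag.card : ℝ) * ((n : ℝ) / (q : ℝ) ^ (n - k))) := by
                ring
        exact (mul_lt_mul_iff_right₀ hWpos).1 h6
      have hoff : (Sf.offDiag.card : ℝ) ≤ (S.ncard : ℝ) ^ 2 := by
        have : Sf.offDiag.card ≤ Sf.card * Sf.card := by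
          rw [Finset.offDiag_card]; omega
        calc (Sf.offDiag.card : ℝ) ≤ (Sf.card : ℝ) * (Sf.card : ℝ) := by exact_mod_cast this
          _ = (S.ncard : ℝ) ^ 2 := by rw [← hSf]; ring
      calc ((P ω₀).card : ℝ) < (Sf.offDiag.card : ℝ) * ((n : ℝ) / (q : ℝ) ^ (n - k)) := hstep
        _ ≤ (S.ncard : ℝ) ^ 2 * ((n : ℝ) / (q : ℝ) ^ (n - k)) := by
            refine mul_le_mul_of_nonneg_right hoff (by positivity)
        _ ≤ 2 * n * (S.ncard : ℝ) ^ 2 / (q : ℝ) ^ (n - k) := by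
            rw [mul_div_assoc']
            gcongr ?_ / _
            have h7 : (1:ℝ) ≤ (n:ℝ) := by exact_mod_cast hn
            nlinarith [sq_nonneg ((S.ncard : ℝ))]
  -- bad elements
  set Bad : Finset (Fin n → F) :=
      Sf.filter (fun s => ∃ t ∈ Sf, t ≠ s ∧ fm ω₀ (s - t) ∈ C) with hBaddef
  have hBadP : Bad.card ≤ (P ω₀).card := by
    refine Finset.card_le_card_of_injOn
      (fun s => (s, if h : ∃ t ∈ Sf, t ≠ s ∧ fm ω₀ (s - t) ∈ C then h.choose else s)) ?_ ?_
    · intro s hs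
      simp only [hBaddef, Finset.mem_coe, Finset.mem_filter] at hs
      obtain ⟨hsS, hex⟩ := hs
      show (s, if h : ∃ t ∈ Sf, t ≠ s ∧ fm ω₀ (s - t) ∈ C then h.choose else s) ∈ P ω₀
      rw [dif_pos hex]
      obtain ⟨htS, hts, hC'⟩ := hex.choose_spec
      simp only [hPdef, Finset.mem_filter, Finset.mem_offDiag]
      exact ⟨⟨hsS, htS, fun h => hts h.symm⟩, hC'⟩
    · intro a _ b _ hab
      exact (Prod.ext_iff.1 hab).1
  set G : Finset (Fin n → F) := Sf \ Bad with hGdef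
  refine ⟨ω₀.1, fun i => ((ω₀.2 i : F)), fun i => Units.ne_zero _,
    ↑(insert (0 : Fin n → F) G), ?_, ?_, ?_, ?_⟩
  · intro x hx
    rcases Finset.mem_insert.1 (Finset.mem_coe.1 hx) with rfl | hx'
    · exact h0S
    · exact Set.mem_toFinset.1 (Finset.mem_sdiff.1 hx').1
  · exact Finset.mem_coe.2 (Finset.mem_insert_self _ _)
  · -- cardinality
    rw [Set.ncard_coe_finset]
    have h8 : Bad.card ≤ Sf.card := Finset.card_le_card (Finset.filter_subset _ _)
    have h9 : G.card = Sf.card - Bad.card := Finset.card_sdiff_of_subset (Finset.filter_subset _ _)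
    have h11 : (G.card : ℝ) = (Sf.card : ℝ) - (Bad.card : ℝ) := by
      rw [h9, Nat.cast_sub h8]
    have h10 : ((insert (0 : Fin n → F) G).card : ℝ) ≥ (Sf.card : ℝ) - (Bad.card : ℝ) := by
      have h12 : G.card ≤ (insert (0 : Fin n → F) G).card :=
        Finset.card_le_card (Finset.subset_insert _ _)
      have h12' : (G.card : ℝ) ≤ ((insert (0 : Fin n → F) G).card : ℝ) := by exact_mod_cast h12
      linarith
    have hrw : (S.ncard : ℝ) * (1 - 2 * n * (S.ncard : ℝ) / (q : ℝ) ^ (n - k))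
        = (S.ncard : ℝ) - 2 * n * (S.ncard : ℝ) ^ 2 / (q : ℝ) ^ (n - k) := by ring
    rw [gt_iff_lt, hrw]
    have hBP : (Bad.card : ℝ) ≤ ((P ω₀).card : ℝ) := by exact_mod_cast hBadP
    have hSfr : (Sf.card : ℝ) = (S.ncard : ℝ) := by exact_mod_cast hSf
    linarith
  · -- pairwise disjointness
    intro c₁ hc₁ c₂ hc₂ hne12
    rw [Set.disjoint_left]
    rintro y ⟨z₁, ⟨b₁, hb₁, rfl⟩, rfl⟩ ⟨z₂, ⟨b₂, hb₂, rfl⟩, h12⟩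
    have hd : monomialMap ω₀.1 (fun i => ((ω₀.2 i : F))) (b₁ - b₂) = c₂ - c₁ := by
      rw [monomialMap_sub]
      linear_combination -h12
    have hdC : c₂ - c₁ ∈ C := Submodule.sub_mem C hc₂ hc₁
    have hd0 : c₂ - c₁ ≠ 0 := sub_ne_zero.2 (Ne.symm hne12)
    have hbne : b₁ ≠ b₂ := by
      rintro rfl
      apply hd0
      rw [← hd, sub_self, monomialMap_zero]
    have hb₁' : b₁ ∈ insert (0 : Fin n → F) G := Finset.mem_coe.1 hb₁
    have hb₂' : b₂ ∈ insert (0 : Fin n → F) G := Finset.mem_coe.1 hb₂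
    have hmemSf : ∀ b, b ∈ insert (0 : Fin n → F) G → b ∈ Sf := by
      intro b hb
      rcases Finset.mem_insert.1 hb with rfl | hb'
      · exact h0Sf
      · exact (Finset.mem_sdiff.1 hb').1
    have hgood : ∀ b ∈ G, ¬ ∃ t ∈ Sf, t ≠ b ∧ fm ω₀ (b - t) ∈ C := by
      intro b hb hex
      exact (Finset.mem_sdiff.1 hb).2
        (Finset.mem_filter.2 ⟨(Finset.mem_sdiff.1 hb).1, hex⟩)
    rcases Finset.mem_insert.1 hb₁' with rfl | hb₁G
    · rcases Finset.mem_insert.1 hb₂' with rfl | hb₂G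
      · exact hbne rfl
      · refine hgood b₂ hb₂G ⟨0, h0Sf, hbne, ?_⟩
        show monomialMap ω₀.1 (fun i => ((ω₀.2 i : F))) (b₂ - 0) ∈ C
        have e1 : monomialMap ω₀.1 (fun i => ((ω₀.2 i : F))) (b₂ - 0)
            = -(monomialMap ω₀.1 (fun i => ((ω₀.2 i : F))) ((0 : Fin n → F) - b₂)) := by
          rw [monomialMap_sub, monomialMap_sub, neg_sub]
        rw [e1, hd]
        exact Submodule.neg_mem C hdC
    · refine hgood b₁ hb₁G ⟨b₂, hmemSf b₂ hb₂', Ne.symm hbne, ?_⟩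
      show monomialMap ω₀.1 (fun i => ((ω₀.2 i : F))) (b₁ - b₂) ∈ C
      rw [hd]
      exact hdC
end

section
/- Let C be a k-dimensional subspace of F^n satisfying A_i(C) < n · q^{-(n-k)} · binom(n,i)(q-1)^i for all 1 ≤ i ≤ n. Let δ ∈ (0, 1 − 1/q) be such that H_q(δ) = 1 − k/n − (log_q n)/n, let ε > 0 with δn − ε ≥ 0, let r = ⌊δn − ε⌋, let S = {x ∈ F^n : wt(x) ≤ r} be the Hamming ball of radius r centered at 0, and set γ = δ/((q-1)(1-δ)). Then there exists B ⊆ S such that 0 ∈ B, |B| > |S|·(1 − γ^ε), and the sets {c + B : c ∈ C} are pairwise disjoint. -/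
/-- The Hilbert entropy function
`H_q(x) = x·log_q(q-1) − x·log_q(x) − (1−x)·log_q(1−x)`
(with the convention `0·log 0 = 0`, automatic since `Real.log 0 = 0`). -/
noncomputable def hilbertEntropy (q : ℕ) (x : ℝ) : ℝ :=
  x * Real.logb q ((q : ℝ) - 1) - x * Real.logb q x - (1 - x) * Real.logb q (1 - x)

open Finset

lemma RSP.sphere_card {F : Type*} [Field F] [Fintype F] [DecidableEq F] (n i : ℕ) :
    #(Finset.univ.filter (fun x : Fin n → F => hammingNorm x = i)) =
      n.choose i * (Fintype.card F - 1) ^ i := by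
  classical
  have hsplit : Finset.univ.filter (fun x : Fin n → F => hammingNorm x = i) =
      (Finset.univ.powersetCard i).biUnion (fun s =>
        Fintype.piFinset (fun t => if t ∈ s then Finset.univ.filter (· ≠ (0:F)) else {0})) := by
    ext x
    simp only [mem_filter, mem_univ, true_and, mem_biUnion, mem_powersetCard, subset_univ,
      Fintype.mem_piFinset]
    constructor
    · intro hx
      refine ⟨Finset.univ.filter (fun t => x t ≠ 0), hx, fun t => ?_⟩
      by_cases h : x t = 0 <;> simp [h]
    · rintro ⟨s, rfl, hmem⟩
      rw [hammingNorm]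
      congr 1
      ext t
      have := hmem t
      by_cases h : t ∈ s <;> simp [h] at this ⊢ <;> simp [this]
  have hpicard : ∀ s : Finset (Fin n),
      #(Fintype.piFinset (fun t : Fin n => if t ∈ s then Finset.univ.filter (· ≠ (0:F)) else {0}))
        = (Fintype.card F - 1) ^ #s := by
    intro s
    rw [Fintype.card_piFinset]
    calc ∏ t : Fin n, #(if t ∈ s then Finset.univ.filter (· ≠ (0:F)) else {0})
        = ∏ t : Fin n, (if t ∈ s then Fintype.card F - 1 else 1) := by
          apply Finset.prod_congr rfl
          intro t _
          by_cases h : t ∈ s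
          · simp only [h, if_true, filter_ne']
            rw [card_erase_of_mem (mem_univ 0), card_univ]
          · simp [h]
      _ = (Fintype.card F - 1) ^ #s := by
          rw [Finset.prod_ite_mem, Finset.univ_inter, Finset.prod_const]
  rw [hsplit, card_biUnion]
  · rw [Finset.sum_congr rfl (fun s hs => by
      rw [hpicard s, (Finset.mem_powersetCard.mp hs).2]), Finset.sum_const,
      card_powersetCard, card_univ, Fintype.card_fin, smul_eq_mul]
  · intro s hs s' hs' hne
    rw [Function.onFun, Finset.disjoint_left]
    intro x hx hx'
    apply hne
    rw [Fintype.mem_piFinset] at hx hx'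
    ext t
    have h1 := hx t; have h2 := hx' t
    constructor
    · intro ht
      by_contra ht'
      simp [ht] at h1; simp [ht'] at h2; exact h1 h2
    · intro ht
      by_contra ht'
      simp [ht] at h2; simp [ht'] at h1; exact h2 h1

lemma RSP.translate_sum {F : Type*} [Field F] [Fintype F] [DecidableEq F] {n : ℕ}
    (Sf : Finset (Fin n → F)) :
    ∑ c : Fin n → F, #(Sf.filter (fun x => x - c ∈ Sf)) = #Sf * #Sf := by
  classical
  calc ∑ c : Fin n → F, #(Sf.filter (fun x => x - c ∈ Sf))
      = ∑ c : Fin n → F, ∑ x ∈ Sf, if x - c ∈ Sf then 1 else 0 := by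
        refine Finset.sum_congr rfl fun c _ => ?_
        rw [card_filter]
    _ = ∑ x ∈ Sf, ∑ c : Fin n → F, if x - c ∈ Sf then 1 else 0 := Finset.sum_comm
    _ = ∑ _x ∈ Sf, #Sf := by
        refine Finset.sum_congr rfl fun x _ => ?_
        rw [← card_filter]
        exact card_nbij' (fun c => x - c) (fun y => x - y)
          (fun a ha => (mem_filter.mp ha).2)
          (fun a ha => mem_filter.mpr ⟨mem_univ _, by simpa [sub_sub_cancel] using ha⟩)
          (fun a _ => sub_sub_cancel x a) (fun a _ => sub_sub_cancel x a)
    _ = #Sf * #Sf := by rw [Finset.sum_const, smul_eq_mul]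

lemma RSP.exists_good_equiv {F : Type*} [Field F] [Fintype F] [DecidableEq F] {n : ℕ}
    (c c' : Fin n → F) (h : hammingNorm c = hammingNorm c') :
    ∃ φ : (Fin n → F) ≃ (Fin n → F),
      (∀ x, hammingNorm (φ x) = hammingNorm x) ∧
      (∀ x y, φ (x + y) = φ x + φ y) ∧ φ c = c' := by
  classical
  set s : Finset (Fin n) := univ.filter (fun t => c t ≠ 0) with hs
  set s' : Finset (Fin n) := univ.filter (fun t => c' t ≠ 0) with hs'
  have hcard : #s' = #s := h.symm
  have hcardc : #s'ᶜ = #sᶜ := by rw [card_compl, card_compl, hcard]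
  let e1 : {t // t ∈ s'} ≃ {t // t ∈ s} := Finset.equivOfCardEq hcard
  let e2' : {t // t ∈ s'ᶜ} ≃ {t // t ∈ sᶜ} := Finset.equivOfCardEq hcardc
  let e2 : {t // ¬ t ∈ s'} ≃ {t // ¬ t ∈ s} :=
    ((Equiv.subtypeEquivRight (fun t => (Finset.mem_compl (s := s')).symm)).trans e2').trans
      (Equiv.subtypeEquivRight (fun t => Finset.mem_compl (s := s)))
  let σ : Fin n ≃ Fin n :=
    ((Equiv.sumCompl (· ∈ s')).symm.trans (e1.sumCongr e2)).trans (Equiv.sumCompl (· ∈ s))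
  have hσ : ∀ t, σ t ∈ s ↔ t ∈ s' := by
    intro t
    by_cases ht : t ∈ s'
    · have : σ t = (e1 ⟨t, ht⟩ : {t // t ∈ s}).1 := by
        simp only [σ, Equiv.trans_apply, Equiv.sumCompl_symm_apply_of_pos ht,
          Equiv.sumCongr_apply, Sum.map_inl, Equiv.sumCompl_apply_inl]
      rw [this]
      exact ⟨fun _ => ht, fun _ => (e1 ⟨t, ht⟩).2⟩
    · have : σ t = (e2 ⟨t, ht⟩ : {t // ¬ t ∈ s}).1 := by
        simp only [σ, Equiv.trans_apply, Equiv.sumCompl_symm_apply_of_neg ht,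
          Equiv.sumCongr_apply, Sum.map_inr, Equiv.sumCompl_apply_inr]
      rw [this]
      exact ⟨fun hmem => absurd hmem (e2 ⟨t, ht⟩).2, fun hmem => absurd hmem ht⟩
  set d : Fin n → F := fun t => if t ∈ s' then c' t / c (σ t) else 1 with hdd
  have hd : ∀ t, d t ≠ 0 := by
    intro t
    by_cases ht : t ∈ s'
    · have h1 : c' t ≠ 0 := (mem_filter.mp ht).2
      have h2 : c (σ t) ≠ 0 := (mem_filter.mp ((hσ t).mpr ht)).2
      simp only [hdd, ht, if_true]
      exact div_ne_zero h1 h2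
    · simp [hdd, ht]
  refine ⟨⟨fun x t => d t * x (σ t), fun y u => y (σ.symm u) / d (σ.symm u), ?_, ?_⟩, ?_, ?_, ?_⟩
  · intro x
    funext u
    simp only [Equiv.apply_symm_apply]
    exact mul_div_cancel_left₀ _ (hd _)
  · intro y
    funext t
    simp only [Equiv.symm_apply_apply]
    rw [mul_comm]
    exact div_mul_cancel₀ _ (hd t)
  · intro x
    show #(univ.filter fun t => d t * x (σ t) ≠ 0) = hammingNorm x
    have hfe : (univ.filter fun t => d t * x (σ t) ≠ 0) =
        (univ.filter fun t => x (σ t) ≠ 0) := by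
      apply filter_congr
      intro t _
      simp [mul_ne_zero_iff, hd t]
    rw [hfe]
    exact card_nbij' σ σ.symm
      (fun a ha => mem_filter.mpr ⟨mem_univ _, by simpa using (mem_filter.mp ha).2⟩)
      (fun a ha => mem_filter.mpr ⟨mem_univ _, by
        simpa [Equiv.apply_symm_apply] using (mem_filter.mp ha).2⟩)
      (fun a _ => σ.symm_apply_apply a) (fun a _ => σ.apply_symm_apply a)
  · intro x y
    funext t
    show d t * (x + y) (σ t) = d t * x (σ t) + d t * y (σ t)
    simp [Pi.add_apply, mul_add]
  · funext t
    show d t * c (σ t) = c' t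
    by_cases ht : t ∈ s'
    · have h2 : c (σ t) ≠ 0 := (mem_filter.mp ((hσ t).mpr ht)).2
      simp only [hdd, ht, if_true]
      exact div_mul_cancel₀ _ h2
    · have h1 : c' t = 0 := by
        by_contra hne
        exact ht (mem_filter.mpr ⟨mem_univ _, hne⟩)
      have h2 : c (σ t) = 0 := by
        by_contra hne
        exact ht ((hσ t).mp (mem_filter.mpr ⟨mem_univ _, hne⟩))
      simp [hdd, ht, h2, h1]

lemma RSP.card_T_eq {F : Type*} [Field F] [Fintype F] [DecidableEq F] {n : ℕ} (r : ℕ)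
    (c c' : Fin n → F) (h : hammingNorm c = hammingNorm c') :
    #((univ.filter (fun x : Fin n → F => hammingNorm x ≤ r)).filter
        (fun x => x - c ∈ univ.filter (fun y : Fin n → F => hammingNorm y ≤ r))) =
    #((univ.filter (fun x : Fin n → F => hammingNorm x ≤ r)).filter
        (fun x => x - c' ∈ univ.filter (fun y : Fin n → F => hammingNorm y ≤ r))) := by
  classical
  obtain ⟨φ, hwt, hadd, hφc⟩ := RSP.exists_good_equiv c c' h
  have hsub : ∀ x y, φ (x - y) = φ x - φ y := by
    intro x y
    have h1 := hadd (x - y) y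
    rw [sub_add_cancel] at h1
    exact eq_sub_of_add_eq h1.symm
  have hwt' : ∀ x, hammingNorm (φ.symm x) = hammingNorm x := by
    intro x
    conv_rhs => rw [← φ.apply_symm_apply x]
    rw [hwt]
  refine card_nbij' φ φ.symm ?_ ?_ (fun a _ => φ.symm_apply_apply a)
    (fun a _ => φ.apply_symm_apply a)
  · intro a ha
    simp only [Finset.mem_coe, mem_filter, mem_univ, true_and] at ha ⊢
    refine ⟨by rw [hwt a]; exact ha.1, ?_⟩
    rw [← hφc, ← hsub, hwt]
    exact ha.2
  · intro a ha
    simp only [Finset.mem_coe, mem_filter, mem_univ, true_and] at ha ⊢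
    refine ⟨by rw [hwt' a]; exact ha.1, ?_⟩
    have : φ (φ.symm a - c) = a - c' := by
      rw [hsub, φ.apply_symm_apply, hφc]
    rw [← hwt (φ.symm a - c), this]
    exact ha.2

lemma RSP.ball_bound {F : Type*} [Field F] [Fintype F] [DecidableEq F] {n : ℕ} (r : ℕ)
    {γ : ℝ} (hγ0 : 0 ≤ γ) (hγ1 : γ ≤ 1) :
    (#(univ.filter (fun x : Fin n → F => hammingNorm x ≤ r)) : ℝ) * γ ^ r ≤
      (1 + ((Fintype.card F - 1 : ℕ) : ℝ) * γ) ^ n := by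
  classical
  have step1 : (#(univ.filter (fun x : Fin n → F => hammingNorm x ≤ r)) : ℝ) * γ ^ r ≤
      ∑ x ∈ univ.filter (fun x : Fin n → F => hammingNorm x ≤ r), γ ^ hammingNorm x := by
    have hrw : (#(univ.filter (fun x : Fin n → F => hammingNorm x ≤ r)) : ℝ) * γ ^ r =
        ∑ _x ∈ univ.filter (fun x : Fin n → F => hammingNorm x ≤ r), γ ^ r := by
      rw [Finset.sum_const, nsmul_eq_mul]
    rw [hrw]
    apply Finset.sum_le_sum
    intro x hx
    exact pow_le_pow_of_le_one hγ0 hγ1 (mem_filter.mp hx).2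
  have step2 : ∑ x ∈ univ.filter (fun x : Fin n → F => hammingNorm x ≤ r), γ ^ hammingNorm x ≤
      ∑ x : Fin n → F, γ ^ hammingNorm x := by
    apply Finset.sum_le_sum_of_subset_of_nonneg (filter_subset _ _)
    intro x _ _
    positivity
  have step3 : ∑ x : Fin n → F, γ ^ hammingNorm x =
      ∑ i ∈ Finset.range (n+1),
        (#(univ.filter (fun x : Fin n → F => hammingNorm x = i)) : ℝ) * γ ^ i := by
    rw [← Finset.sum_fiberwise_of_maps_to (g := fun x : Fin n → F => hammingNorm x)
      (t := Finset.range (n+1)) (fun x _ => Finset.mem_range.mpr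
        (Nat.lt_succ_of_le (le_trans hammingNorm_le_card_fintype (le_of_eq (Fintype.card_fin n)))))
      (fun x => γ ^ hammingNorm x)]
    refine Finset.sum_congr rfl fun i _ => ?_
    rw [Finset.sum_congr rfl (fun x hx => by rw [(mem_filter.mp hx).2]),
      Finset.sum_const, nsmul_eq_mul]
  calc (#(univ.filter (fun x : Fin n → F => hammingNorm x ≤ r)) : ℝ) * γ ^ r
      ≤ ∑ i ∈ Finset.range (n+1),
        (#(univ.filter (fun x : Fin n → F => hammingNorm x = i)) : ℝ) * γ ^ i := by
        rw [← step3]; exact le_trans step1 step2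
    _ = ∑ i ∈ Finset.range (n+1),
        (((Fintype.card F - 1 : ℕ) : ℝ) * γ) ^ i * 1 ^ (n - i) * (n.choose i : ℝ) := by
        refine Finset.sum_congr rfl fun i _ => ?_
        rw [RSP.sphere_card n i]
        push_cast
        ring
    _ = (1 + ((Fintype.card F - 1 : ℕ) : ℝ) * γ) ^ n := by
        rw [← add_pow]
        ring_nf



lemma RSP.key_id {q n k : ℕ} {δ γ : ℝ} (hq2 : 2 ≤ q) (hn : 1 ≤ n) (hkn : k ≤ n)
    (hδ0 : 0 < δ) (hδ1 : δ < 1)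
    (hγdef : γ = δ / (((q:ℝ) - 1) * (1 - δ)))
    (hH : hilbertEntropy q δ = 1 - (k : ℝ) / n - Real.logb q n / n) :
    γ ^ (δ * (n:ℝ)) * (1 - δ) ^ n = (n : ℝ) / (q : ℝ) ^ (n - k) := by
  have h1δ : (0:ℝ) < 1 - δ := by linarith
  have hqR : (1:ℝ) < (q:ℝ) := by exact_mod_cast hq2
  have hq1 : (0:ℝ) < (q:ℝ) - 1 := by linarith
  have hγ0 : 0 < γ := by rw [hγdef]; positivity
  have hn0 : (0:ℝ) < n := by exact_mod_cast hn
  have hlogq : 0 < Real.log q := Real.log_pos hqR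
  have hLpos : 0 < γ ^ (δ * (n:ℝ)) * (1 - δ) ^ n := by positivity
  have hRpos : 0 < (n : ℝ) / (q : ℝ) ^ (n - k) := by positivity
  apply Real.log_injOn_pos (Set.mem_Ioi.mpr hLpos) (Set.mem_Ioi.mpr hRpos)
  rw [Real.log_mul (ne_of_gt (Real.rpow_pos_of_pos hγ0 _)) (ne_of_gt (by positivity)),
    Real.log_rpow hγ0, Real.log_pow, Real.log_div (ne_of_gt hn0) (ne_of_gt (by positivity)),
    Real.log_pow]
  have hlogγ : Real.log γ = Real.log δ - Real.log ((q:ℝ)-1) - Real.log (1-δ) := by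
    rw [hγdef, Real.log_div (ne_of_gt hδ0) (ne_of_gt (by positivity)),
      Real.log_mul (ne_of_gt hq1) (ne_of_gt h1δ)]
    ring
  have hH' := hH
  unfold hilbertEntropy at hH'
  rw [← Real.log_div_log, ← Real.log_div_log, ← Real.log_div_log, ← Real.log_div_log] at hH'
  have key : (n:ℝ) * (δ * Real.log ((q:ℝ)-1) - δ * Real.log δ - (1-δ) * Real.log (1-δ)) =
      ((n:ℝ) - (k:ℝ)) * Real.log q - Real.log n := by
    have hLq : Real.log q ≠ 0 := ne_of_gt hlogq
    have hnne : (n:ℝ) ≠ 0 := ne_of_gt hn0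
    field_simp at hH'
    have h3 : ((n:ℝ) * (δ * Real.log ((q:ℝ)-1) - δ * Real.log δ - (1-δ) * Real.log (1-δ)))
        * ((n:ℝ) * Real.log q) =
        (((n:ℝ) - (k:ℝ)) * Real.log q - Real.log n) * ((n:ℝ) * Real.log q) := by
      linear_combination ((n:ℝ) * Real.log q) * hH'
    exact mul_right_cancel₀ (mul_ne_zero hnne hLq) h3
  have hcast : (((n - k : ℕ)) : ℝ) = (n:ℝ) - (k:ℝ) := by
    rw [Nat.cast_sub hkn]
  rw [hcast]
  linear_combination (δ * (n:ℝ)) * hlogγ - key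

lemma RSP.card_filter_lt (n i : ℕ) (h : i ≤ n) :
    #(univ.filter (fun t : Fin n => (t:ℕ) < i)) = i := by
  have : #(univ.filter (fun t : Fin n => (t:ℕ) < i)) = #(univ : Finset (Fin i)) := by
    refine Finset.card_bij' (fun a ha => (⟨(a : Fin n), (mem_filter.mp ha).2⟩ : Fin i))
      (fun b _ => (⟨(b : Fin i), lt_of_lt_of_le b.2 h⟩ : Fin n))
      (fun a _ => mem_univ _)
      (fun b _ => mem_filter.mpr ⟨mem_univ _, b.2⟩)
      (fun a _ => by ext; rfl) (fun b _ => by ext; rfl)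
  rw [this, card_univ, Fintype.card_fin]

lemma RSP.wt_canon {F : Type*} [Field F] [Fintype F] [DecidableEq F] (n i : ℕ) (h : i ≤ n) :
    hammingNorm (fun t : Fin n => if (t:ℕ) < i then (1:F) else 0) = i := by
  classical
  rw [hammingNorm]
  have he : (univ.filter fun t : Fin n => (if (t:ℕ) < i then (1:F) else 0) ≠ 0) =
      univ.filter (fun t : Fin n => (t:ℕ) < i) := by
    apply filter_congr
    intro t _
    by_cases ht : (t:ℕ) < i <;> simp [ht]
  rw [he, RSP.card_filter_lt n i h]

/-- Let `C` be a `k`-dimensional subspace of `F^n` satisfying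
`A_i(C) < n · q^{-(n-k)} · binom(n,i)(q-1)^i` for all `1 ≤ i ≤ n`. Let `δ ∈ (0, 1 − 1/q)`
be such that `H_q(δ) = 1 − k/n − (log_q n)/n`, let `ε > 0` with `δn − ε ≥ 0`,
let `r = ⌊δn − ε⌋`, let `S = {x ∈ F^n : wt(x) ≤ r}` be the Hamming ball of radius `r`
centered at `0`, and set `γ = δ/((q-1)(1-δ))`. Then there exists `B ⊆ S` such that
`0 ∈ B`, `|B| > |S|·(1 − γ^ε)`, and the sets `{c + B : c ∈ C}` are pairwise disjoint. -/
theorem rough_sphere_packing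
    (F : Type*) [Field F] [Fintype F] [DecidableEq F] (q n k : ℕ)
    (hq : Fintype.card F = q) (hk : 1 ≤ k) (hkn : k ≤ n)
    (C : Submodule F (Fin n → F)) (hC : Module.finrank F C = k)
    (hwd : ∀ i : ℕ, 1 ≤ i → i ≤ n →
      (({x : Fin n → F | x ∈ C ∧ hammingNorm x = i}.ncard : ℝ)) <
        (n : ℝ) * ((n.choose i * (q - 1) ^ i : ℕ) : ℝ) / (q : ℝ) ^ (n - k))
    (δ : ℝ) (hδ : δ ∈ Set.Ioo (0 : ℝ) (1 - 1 / q))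
    (hHδ : hilbertEntropy q δ = 1 - (k : ℝ) / n - Real.logb q n / n)
    (ε : ℝ) (hε : ε > 0) (hδε : δ * n - ε ≥ 0)
    (r : ℕ) (hr : r = ⌊δ * n - ε⌋₊)
    (S : Set (Fin n → F)) (hSdef : S = {x : Fin n → F | hammingNorm x ≤ r})
    (γ : ℝ) (hγ : γ = δ / (((q : ℝ) - 1) * (1 - δ))) :
    ∃ B ⊆ S, (0 : Fin n → F) ∈ B ∧
      (B.ncard : ℝ) > (S.ncard : ℝ) * (1 - γ ^ ε) ∧
      (C : Set (Fin n → F)).Pairwise (fun c₁ c₂ =>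
        Disjoint ((fun b => c₁ + b) '' B) ((fun b => c₂ + b) '' B)) := by
  classical
  have hq2 : 2 ≤ q := by rw [← hq]; exact Fintype.one_lt_card
  have hn1 : 1 ≤ n := hk.trans hkn
  have hn0R : (0:ℝ) < n := by exact_mod_cast hn1
  have hqR1 : (1:ℝ) < (q:ℝ) := by
    have : (2:ℝ) ≤ (q:ℝ) := by exact_mod_cast hq2
    linarith
  have hqR2 : (2:ℝ) ≤ (q:ℝ) := by exact_mod_cast hq2
  have hq1 : (1:ℝ) ≤ (q:ℝ) - 1 := by linarith
  have hδ0 : 0 < δ := hδ.1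
  have hq0 : (0:ℝ) < q := by linarith
  have hinvq : (0:ℝ) < 1/q := by positivity
  have hδ1 : δ < 1 := by have := hδ.2; linarith
  have h1δ : (0:ℝ) < 1 - δ := by linarith
  have hγ0 : 0 < γ := by rw [hγ]; positivity
  have hγ1 : γ < 1 := by
    rw [hγ, div_lt_one (by positivity)]
    have e1 : 1/(q:ℝ) < 1 - δ := by linarith [hδ.2]
    have e2 : ((q:ℝ)-1) * (1/q) < ((q:ℝ)-1)*(1-δ) :=
      mul_lt_mul_of_pos_left e1 (by linarith)
    have e3 : ((q:ℝ)-1) * (1/q) = 1 - 1/q := by field_simp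
    have := hδ.2
    linarith
  set Sf : Finset (Fin n → F) := univ.filter (fun x => hammingNorm x ≤ r) with hSf
  have hSS : S = ↑Sf := by rw [hSdef]; ext x; simp [hSf]
  have h0S : (0 : Fin n → F) ∈ Sf := by simp [hSf]
  set Bad : Finset (Fin n → F) :=
    Sf.filter (fun x => ∃ c : Fin n → F, c ∈ C ∧ c ≠ 0 ∧ x - c ∈ Sf) with hBadDef
  set B : Set (Fin n → F) := ↑(Sf \ Bad) ∪ {0} with hBdef
  have hKey : (#Bad : ℝ) < γ ^ ε * (#Sf : ℝ) := by
    have hSfpos : 0 < (#Sf:ℝ) := by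
      have hne : Sf.Nonempty := ⟨0, h0S⟩
      exact_mod_cast card_pos.mpr hne
    have hγε : 0 < γ ^ ε := Real.rpow_pos_of_pos hγ0 ε
    by_cases hBadE : Bad = ∅
    · rw [hBadE]
      simpa using mul_pos hγε hSfpos
    obtain ⟨x₀, hx₀⟩ := nonempty_iff_ne_empty.mpr hBadE
    rw [hBadDef, mem_filter] at hx₀
    obtain ⟨hx₀Sf, c₀, hc₀C, hc₀ne, hc₀Sf⟩ := hx₀
    set Csupp : Finset (Fin n → F) :=
      univ.filter (fun c : Fin n → F => c ∈ C ∧ c ≠ 0) with hCsuppDef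
    have hwtle : ∀ c : Fin n → F, hammingNorm c ≤ n :=
      fun c => le_trans hammingNorm_le_card_fintype (le_of_eq (Fintype.card_fin n))
    -- symmetry: the translated-ball intersection only depends on the weight
    have hTJ : ∀ i, i ≤ n → ∀ c : Fin n → F, hammingNorm c = i →
        #(Sf.filter (fun x => x - c ∈ Sf)) =
        #(Sf.filter (fun x => x - (fun t : Fin n => if (t:ℕ) < i then (1:F) else 0) ∈ Sf)) := by
      intro i hi c hc
      have h := RSP.card_T_eq (F := F) (n := n) r c
        (fun t : Fin n => if (t:ℕ) < i then (1:F) else 0)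
        (by rw [hc, RSP.wt_canon n i hi])
      rw [← hSf] at h
      exact h
    -- union bound
    have step2 : #Bad ≤ ∑ c ∈ Csupp, #(Sf.filter (fun x => x - c ∈ Sf)) := by
      refine le_trans (card_le_card ?_) card_biUnion_le
      intro x hx
      rw [hBadDef, mem_filter] at hx
      obtain ⟨hxSf, c, hcC, hcne, hcS⟩ := hx
      exact mem_biUnion.mpr ⟨c, mem_filter.mpr ⟨mem_univ _, hcC, hcne⟩,
        mem_filter.mpr ⟨hxSf, hcS⟩⟩
    have hmapsto : ∀ c ∈ Csupp, hammingNorm c ∈ Icc 1 n := by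
      intro c hc
      rw [hCsuppDef, mem_filter] at hc
      exact mem_Icc.mpr ⟨hammingNorm_pos_iff.mpr hc.2.2, hwtle c⟩
    have step3 : ∑ c ∈ Csupp, #(Sf.filter (fun x => x - c ∈ Sf))
        = ∑ i ∈ Icc 1 n, ∑ c ∈ Csupp.filter (fun c => hammingNorm c = i),
            #(Sf.filter (fun x => x - c ∈ Sf)) :=
      (Finset.sum_fiberwise_of_maps_to hmapsto _).symm
    have step4 : ∀ i ∈ Icc 1 n,
        ∑ c ∈ Csupp.filter (fun c => hammingNorm c = i), #(Sf.filter (fun x => x - c ∈ Sf))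
        = #(Csupp.filter (fun c => hammingNorm c = i)) *
          #(Sf.filter (fun x => x - (fun t : Fin n => if (t:ℕ) < i then (1:F) else 0) ∈ Sf)) := by
      intro i hi
      rw [Finset.sum_congr rfl
        (fun c hc => hTJ i (mem_Icc.mp hi).2 c (mem_filter.mp hc).2),
        Finset.sum_const, smul_eq_mul]
    -- the weight-distribution hypothesis, in Finset form
    have hAreal : ∀ i ∈ Icc 1 n,
        ((#(Csupp.filter (fun c => hammingNorm c = i)) : ℝ))
        < (n:ℝ) * (#(univ.filter (fun x : Fin n → F => hammingNorm x = i)) : ℝ)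
            / (q:ℝ)^(n-k) := by
      intro i hi
      obtain ⟨hi1, hin⟩ := mem_Icc.mp hi
      have h1 := hwd i hi1 hin
      have e1 : {x : Fin n → F | x ∈ C ∧ hammingNorm x = i}
          = ↑(Csupp.filter (fun c => hammingNorm c = i)) := by
        ext x
        constructor
        · rintro ⟨hxC, hxw⟩
          have hx0 : x ≠ 0 := by
            intro h0
            rw [h0, hammingNorm_zero] at hxw
            omega
          exact Finset.mem_coe.mpr (mem_filter.mpr
            ⟨mem_filter.mpr ⟨mem_univ _, hxC, hx0⟩, hxw⟩)
        · intro hx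
          have hx' := mem_filter.mp (Finset.mem_coe.mp hx)
          exact ⟨(mem_filter.mp hx'.1).2.1, hx'.2⟩
      have e2 : (n.choose i * (q - 1)^i : ℕ)
          = #(univ.filter (fun x : Fin n → F => hammingNorm x = i)) := by
        rw [RSP.sphere_card n i, hq]
      rw [e1, Set.ncard_coe_finset, e2] at h1
      exact h1
    -- global translate identity
    have step5 : ∑ i ∈ range (n+1),
        #(univ.filter (fun x : Fin n → F => hammingNorm x = i)) *
          #(Sf.filter (fun x => x - (fun t : Fin n => if (t:ℕ) < i then (1:F) else 0) ∈ Sf))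
        = #Sf * #Sf := by
      have h1 : ∑ i ∈ range (n+1), ∑ c ∈ univ.filter (fun c : Fin n → F => hammingNorm c = i),
          #(Sf.filter (fun x => x - c ∈ Sf))
          = ∑ c : Fin n → F, #(Sf.filter (fun x => x - c ∈ Sf)) :=
        Finset.sum_fiberwise_of_maps_to (fun c _ => mem_range.mpr (Nat.lt_succ_of_le (hwtle c))) _
      rw [RSP.translate_sum Sf] at h1
      rw [← h1]
      refine Finset.sum_congr rfl fun i hi => ?_
      rw [Finset.sum_congr rfl
        (fun c hc => hTJ i (Nat.lt_succ_iff.mp (mem_range.mp hi)) c (mem_filter.mp hc).2),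
        Finset.sum_const, smul_eq_mul]
    -- strictness witness
    have hi₀ : hammingNorm c₀ ∈ Icc 1 n :=
      mem_Icc.mpr ⟨hammingNorm_pos_iff.mpr hc₀ne, hwtle c₀⟩
    have hJpos : 0 < #(Sf.filter (fun x =>
        x - (fun t : Fin n => if (t:ℕ) < hammingNorm c₀ then (1:F) else 0) ∈ Sf)) := by
      rw [← hTJ (hammingNorm c₀) (hwtle c₀) c₀ rfl]
      exact card_pos.mpr ⟨x₀, mem_filter.mpr ⟨hx₀Sf, hc₀Sf⟩⟩
    -- real chain
    have chain1 : (#Bad : ℝ) ≤ ∑ i ∈ Icc 1 n,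
        (#(Csupp.filter (fun c => hammingNorm c = i)) : ℝ) *
        (#(Sf.filter (fun x => x - (fun t : Fin n => if (t:ℕ) < i then (1:F) else 0) ∈ Sf)) : ℝ) := by
      have hnat := step2.trans (le_of_eq (step3.trans (Finset.sum_congr rfl step4)))
      exact_mod_cast hnat
    have chain2 : ∑ i ∈ Icc 1 n,
        (#(Csupp.filter (fun c => hammingNorm c = i)) : ℝ) *
        (#(Sf.filter (fun x => x - (fun t : Fin n => if (t:ℕ) < i then (1:F) else 0) ∈ Sf)) : ℝ)
        < ∑ i ∈ Icc 1 n,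
        ((n:ℝ) * (#(univ.filter (fun x : Fin n → F => hammingNorm x = i)) : ℝ) / (q:ℝ)^(n-k)) *
        (#(Sf.filter (fun x => x - (fun t : Fin n => if (t:ℕ) < i then (1:F) else 0) ∈ Sf)) : ℝ) := by
      refine Finset.sum_lt_sum
        (fun i hi => mul_le_mul_of_nonneg_right (hAreal i hi).le (Nat.cast_nonneg _)) ?_
      exact ⟨hammingNorm c₀, hi₀,
        mul_lt_mul_of_pos_right (hAreal _ hi₀) (by exact_mod_cast hJpos)⟩
    have chain3 : ∑ i ∈ Icc 1 n,
        ((n:ℝ) * (#(univ.filter (fun x : Fin n → F => hammingNorm x = i)) : ℝ) / (q:ℝ)^(n-k)) *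
        (#(Sf.filter (fun x => x - (fun t : Fin n => if (t:ℕ) < i then (1:F) else 0) ∈ Sf)) : ℝ)
        ≤ ((n:ℝ)/(q:ℝ)^(n-k)) * ((#Sf:ℝ) * (#Sf:ℝ)) := by
      have h2 : ∑ i ∈ Icc 1 n,
          ((n:ℝ) * (#(univ.filter (fun x : Fin n → F => hammingNorm x = i)) : ℝ) / (q:ℝ)^(n-k)) *
          (#(Sf.filter (fun x => x - (fun t : Fin n => if (t:ℕ) < i then (1:F) else 0) ∈ Sf)) : ℝ)
          = ((n:ℝ)/(q:ℝ)^(n-k)) * ∑ i ∈ Icc 1 n,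
            (#(univ.filter (fun x : Fin n → F => hammingNorm x = i)) : ℝ) *
            (#(Sf.filter (fun x => x - (fun t : Fin n => if (t:ℕ) < i then (1:F) else 0) ∈ Sf)) : ℝ) := by
        rw [Finset.mul_sum]
        exact Finset.sum_congr rfl fun i _ => by ring
      rw [h2]
      refine mul_le_mul_of_nonneg_left ?_ (by positivity)
      calc ∑ i ∈ Icc 1 n,
            (#(univ.filter (fun x : Fin n → F => hammingNorm x = i)) : ℝ) *
            (#(Sf.filter (fun x => x - (fun t : Fin n => if (t:ℕ) < i then (1:F) else 0) ∈ Sf)) : ℝ)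
          ≤ ∑ i ∈ range (n+1),
            (#(univ.filter (fun x : Fin n → F => hammingNorm x = i)) : ℝ) *
            (#(Sf.filter (fun x => x - (fun t : Fin n => if (t:ℕ) < i then (1:F) else 0) ∈ Sf)) : ℝ) :=
            Finset.sum_le_sum_of_subset_of_nonneg
              (fun i hi => mem_range.mpr (Nat.lt_succ_of_le (mem_Icc.mp hi).2))
              (fun i _ _ => mul_nonneg (Nat.cast_nonneg _) (Nat.cast_nonneg _))
        _ = (#Sf:ℝ) * (#Sf:ℝ) := by exact_mod_cast congrArg (Nat.cast : ℕ → ℝ) step5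
    -- analytic conclusion
    have keyid := RSP.key_id (δ := δ) (γ := γ) hq2 hn1 hkn hδ0 hδ1 hγ hHδ
    have hcardF : ((Fintype.card F - 1 : ℕ):ℝ) = (q:ℝ) - 1 := by
      rw [hq, Nat.cast_sub (by omega)]
      norm_num
    have hq10 : ((q:ℝ) - 1) ≠ 0 := by linarith
    have h1δ0 : (1 - δ) ≠ 0 := ne_of_gt h1δ
    have hratio : (1 + ((Fintype.card F - 1 : ℕ):ℝ) * γ) * (1-δ) = 1 := by
      rw [hcardF, hγ]
      field_simp
      ring
    have ball := RSP.ball_bound (F := F) (n := n) r hγ0.le hγ1.le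
    rw [← hSf] at ball
    have hball : (#Sf:ℝ) * γ^r * (1-δ)^n ≤ 1 := by
      calc (#Sf:ℝ) * γ^r * (1-δ)^n
          ≤ (1 + ((Fintype.card F - 1:ℕ):ℝ)*γ)^n * (1-δ)^n :=
            mul_le_mul_of_nonneg_right ball (by positivity)
        _ = ((1 + ((Fintype.card F - 1:ℕ):ℝ)*γ)*(1-δ))^n := (mul_pow _ _ n).symm
        _ = 1 := by rw [hratio, one_pow]
    have hfloor : (r:ℝ) ≤ δ * n - ε := by
      rw [hr]
      exact Nat.floor_le hδε
    have hsplit : γ^(δ*(n:ℝ)) = γ^(δ*(n:ℝ) - (r:ℝ)) * γ^(r:ℕ) := by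
      rw [← Real.rpow_natCast γ r, ← Real.rpow_add hγ0]
      ring_nf
    have hexp : γ^(δ*(n:ℝ) - (r:ℝ)) ≤ γ^ε :=
      Real.rpow_le_rpow_of_exponent_ge hγ0 hγ1.le (by linarith)
    have final : ((n:ℝ)/(q:ℝ)^(n-k)) * ((#Sf:ℝ)*(#Sf:ℝ)) ≤ γ^ε * (#Sf:ℝ) := by
      rw [← keyid, hsplit]
      calc γ^(δ*(n:ℝ) - (r:ℝ)) * γ^(r:ℕ) * (1-δ)^n * ((#Sf:ℝ) * (#Sf:ℝ))
          = (γ^(δ*(n:ℝ) - (r:ℝ)) * ((#Sf:ℝ) * γ^(r:ℕ) * (1-δ)^n)) * (#Sf:ℝ) := by ring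
        _ ≤ (γ^ε * 1) * (#Sf:ℝ) := by
            refine mul_le_mul_of_nonneg_right ?_ hSfpos.le
            exact mul_le_mul hexp hball
              (mul_nonneg (mul_nonneg (Nat.cast_nonneg _) (pow_nonneg hγ0.le _))
                (pow_nonneg h1δ.le _)) hγε.le
        _ = γ^ε * (#Sf:ℝ) := by ring
    calc (#Bad:ℝ) ≤ _ := chain1
      _ < _ := chain2
      _ ≤ _ := chain3
      _ ≤ _ := final
  refine ⟨B, ?_, ?_, ?_, ?_⟩
  · -- B ⊆ S
    rw [hSS, hBdef]
    apply Set.union_subset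
    · intro x hx
      exact Finset.mem_coe.mpr ((Finset.mem_sdiff.mp (Finset.mem_coe.mp hx)).1)
    · intro x hx
      rw [Set.mem_singleton_iff] at hx
      subst hx
      exact Finset.mem_coe.mpr h0S
  · exact Set.mem_union_right _ rfl
  · -- cardinality
    have hfin : B.Finite := Set.toFinite _
    have hBsub : (↑(Sf \ Bad) : Set (Fin n → F)) ⊆ B := Set.subset_union_left
    have h1 : ((Sf \ Bad).card : ℝ) ≤ (B.ncard : ℝ) := by
      have h2 := Set.ncard_le_ncard hBsub hfin
      rw [Set.ncard_coe_finset] at h2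
      exact_mod_cast h2
    have hBadSf : Bad ⊆ Sf := filter_subset _ _
    have h2 : (#(Sf \ Bad) : ℝ) = (#Sf : ℝ) - (#Bad : ℝ) := by
      rw [card_sdiff_of_subset hBadSf, Nat.cast_sub (card_le_card hBadSf)]
    have h3 : (S.ncard : ℝ) = (#Sf : ℝ) := by rw [hSS, Set.ncard_coe_finset]
    rw [h3]
    have : (#Sf:ℝ) * (1 - γ^ε) = (#Sf:ℝ) - γ^ε * (#Sf:ℝ) := by ring
    rw [this]
    linarith
  · -- pairwise disjoint
    intro c₁ hc1 c₂ hc2 hne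
    rw [Set.disjoint_left]
    rintro a ⟨b₁, hb₁, rfl⟩ ⟨b₂, hb₂, heq⟩
    have heq' : c₂ + b₂ = c₁ + b₁ := heq
    have hBinSf : ∀ b : Fin n → F, b ∈ B → b ∈ Sf := by
      intro b hb
      rcases hb with hb | hb
      · exact (Finset.mem_sdiff.mp (Finset.mem_coe.mp hb)).1
      · rw [Set.mem_singleton_iff] at hb; rw [hb]; exact h0S
    rcases hb₁ with hb₁ | hb₁
    · obtain ⟨hb1Sf, hb1nB⟩ := Finset.mem_sdiff.mp (Finset.mem_coe.mp hb₁)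
      apply hb1nB
      rw [hBadDef]
      refine mem_filter.mpr ⟨hb1Sf, c₂ - c₁, sub_mem hc2 hc1,
        sub_ne_zero_of_ne (Ne.symm hne), ?_⟩
      have hbb : b₁ - (c₂ - c₁) = b₂ := by
        calc b₁ - (c₂ - c₁) = (c₁ + b₁) - c₂ := by abel
          _ = (c₂ + b₂) - c₂ := by rw [heq']
          _ = b₂ := by abel
      rw [hbb]
      exact hBinSf b₂ hb₂
    · rw [Set.mem_singleton_iff] at hb₁
      rcases hb₂ with hb₂ | hb₂
      · obtain ⟨hb2Sf, hb2nB⟩ := Finset.mem_sdiff.mp (Finset.mem_coe.mp hb₂)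
        apply hb2nB
        rw [hBadDef]
        refine mem_filter.mpr ⟨hb2Sf, c₁ - c₂, sub_mem hc1 hc2,
          sub_ne_zero_of_ne hne, ?_⟩
        have hbb : b₂ - (c₁ - c₂) = b₁ := by
          calc b₂ - (c₁ - c₂) = (c₂ + b₂) - c₁ := by abel
            _ = (c₁ + b₁) - c₁ := by rw [heq']
            _ = b₁ := by abel
        rw [hbb, hb₁]
        exact h0S
      · rw [Set.mem_singleton_iff] at hb₂
        apply hne
        rw [hb₁, add_zero, hb₂, add_zero] at heq'
        exact heq'.symm
end

section
/- Let F be a finite field with q elements, n ≥ 1, and x, y ∈ F^n. Then binom(n, wt(x+y))·(q-1)^{wt(x+y)} ≤ β(wt(x), wt(y)) · binom(n, wt(x))·(q-1)^{wt(x)} · binom(n, wt(y))·(q-1)^{wt(y)}, where β(w₁, w₂) = max{w₁, n−w₁, w₂, n−w₂}/n (an inequality of real numbers). -/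
/-- Monotonicity of binomial coefficients up to the middle. -/
lemma aux_mono (n : ℕ) : ∀ k l : ℕ, k ≤ l → 2 * l ≤ n + 1 → n.choose k ≤ n.choose l := by
  intro k l
  induction l with
  | zero => intro h _; rw [Nat.le_zero.mp h]
  | succ l ih =>
    intro hk hl
    rcases Nat.eq_or_lt_of_le hk with rfl | hk'
    · exact le_rfl
    · have h1 : n.choose k ≤ n.choose l := ih (by omega) (by omega)
      have h2 : n.choose l ≤ n.choose (l + 1) := by
        have hid := Nat.choose_succ_right_eq n l
        have hnl : l + 1 ≤ n - l := by omega
        have hle : n.choose l * (l + 1) ≤ n.choose (l + 1) * (l + 1) := by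
          calc n.choose l * (l + 1) ≤ n.choose l * (n - l) := Nat.mul_le_mul_left _ hnl
            _ = n.choose (l + 1) * (l + 1) := hid.symm
        exact Nat.le_of_mul_le_mul_right hle (by omega)
      exact h1.trans h2

/-- Splitting bound for binomial coefficients. -/
lemma aux_split (n k s : ℕ) (hsk : s ≤ k) (hkn : k ≤ n) :
    n.choose k ≤ n.choose s * (n - s).choose (k - s) := by
  have h := Nat.choose_mul (n := n) hsk
  calc n.choose k = n.choose k * 1 := (mul_one _).symm
    _ ≤ n.choose k * k.choose s := Nat.mul_le_mul_left _ (Nat.choose_pos hsk)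
    _ = n.choose s * (n - s).choose (k - s) := h

lemma aux_two_pow (a k : ℕ) : a.choose k ≤ 2 ^ a := by
  rcases le_or_gt k a with h | h
  · calc a.choose k ≤ ∑ i ∈ Finset.range (a + 1), a.choose i :=
        Finset.single_le_sum (f := fun i => a.choose i) (fun _ _ => Nat.zero_le _)
          (Finset.mem_range.mpr (by omega))
      _ = 2 ^ a := Nat.sum_range_choose a
  · simp [Nat.choose_eq_zero_of_lt h]

lemma idA (n a : ℕ) (hn : 1 ≤ n) : n * (n - 1).choose a = (n - a) * n.choose a := by
  obtain ⟨m, rfl⟩ : ∃ m, n = m + 1 := ⟨n - 1, by omega⟩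
  simp only [Nat.add_sub_cancel]
  have h1 := Nat.add_one_mul_choose_eq m a
  have h2 := Nat.choose_succ_right_eq (m + 1) a
  rw [h1, h2]; ring

lemma idB (n b : ℕ) (hn : 1 ≤ n) (hb : 1 ≤ b) :
    n * (n - 1).choose (b - 1) = b * n.choose b := by
  obtain ⟨m, rfl⟩ : ∃ m, n = m + 1 := ⟨n - 1, by omega⟩
  obtain ⟨k, rfl⟩ : ∃ k, b = k + 1 := ⟨b - 1, by omega⟩
  simp only [Nat.add_sub_cancel]
  have h1 := Nat.add_one_mul_choose_eq m k
  rw [h1]; ring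

/-- The core lemma, small-sum case. -/
lemma L1 (r n a b c : ℕ) (hr : 1 ≤ r) (hab : a ≤ b) (habn : a + b ≤ n)
    (hc1 : b ≤ a + c) (hc2 : c ≤ a + b) :
    n.choose c * r ^ c ≤ (n - 1).choose a * r ^ a * (n.choose b * r ^ b) := by
  rcases Nat.eq_zero_or_pos b with rfl | hb
  · have ha : a = 0 := by omega
    have hc : c = 0 := by omega
    subst ha; subst hc; simp
  rcases le_or_gt b c with hbc | hbc
  · have hcn : c ≤ n := le_trans hc2 habn
    have h1 : n.choose c ≤ n.choose b * (n - b).choose (c - b) := aux_split n c b hbc hcn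
    have h2 : (n - b).choose (c - b) ≤ (n - 1).choose (c - b) :=
      Nat.choose_le_choose _ (by omega)
    have h3 : (n - 1).choose (c - b) ≤ (n - 1).choose a := aux_mono (n - 1) (c - b) a (by omega) (by omega)
    calc n.choose c * r ^ c ≤ (n.choose b * (n - 1).choose a) * r ^ c :=
          Nat.mul_le_mul_right _ (h1.trans (Nat.mul_le_mul_left _ (h2.trans h3)))
      _ ≤ (n.choose b * (n - 1).choose a) * r ^ (a + b) :=
          Nat.mul_le_mul_left _ (Nat.pow_le_pow_right hr hc2)
      _ = (n - 1).choose a * r ^ a * (n.choose b * r ^ b) := by rw [pow_add]; ring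
  · have hbn' : b ≤ n := by omega
    have h1 : n.choose c ≤ n.choose b * b.choose c := by
      have h := Nat.choose_mul (n := n) hbc.le
      have hpos : 0 < (n - c).choose (b - c) := Nat.choose_pos (by omega)
      calc n.choose c = n.choose c * 1 := (mul_one _).symm
        _ ≤ n.choose c * (n - c).choose (b - c) := Nat.mul_le_mul_left _ hpos
        _ = n.choose b * b.choose c := h.symm
    have h2 : b.choose c = b.choose (b - c) := (Nat.choose_symm hbc.le).symm
    have h3 : b.choose (b - c) ≤ (n - 1).choose (b - c) := Nat.choose_le_choose _ (by omega)
    have h4 : (n - 1).choose (b - c) ≤ (n - 1).choose a := aux_mono _ _ _ (by omega) (by omega)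
    calc n.choose c * r ^ c ≤ (n.choose b * (n - 1).choose a) * r ^ c := by
          refine Nat.mul_le_mul_right _ (h1.trans ?_)
          rw [h2]
          exact Nat.mul_le_mul_left _ (h3.trans h4)
      _ ≤ (n.choose b * (n - 1).choose a) * r ^ (a + b) :=
          Nat.mul_le_mul_left _ (Nat.pow_le_pow_right hr (by omega))
      _ = (n - 1).choose a * r ^ a * (n.choose b * r ^ b) := by rw [pow_add]; ring

/-- Crude bound in the large-`c` region. -/
lemma claim (n a b c : ℕ) (hab : a ≤ b) (hbn : b ≤ n) (hcn : c ≤ n)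
    (h : 2 * n + 1 ≤ a + b + c) : n.choose c ≤ n.choose a * 2 ^ (a + b - c) := by
  have hda : n - c < a := by omega
  have hsym : n.choose c = n.choose (n - c) := (Nat.choose_symm hcn).symm
  rcases le_or_gt (n - c) (n - a) with hd | hd
  · have h2 : n.choose (n - c) ≤ n.choose a := by
      rcases le_or_gt (2 * a) n with ha | ha
      · exact aux_mono n _ a hda.le (by omega)
      · calc n.choose (n - c) ≤ n.choose (n - a) := aux_mono n _ _ hd (by omega)
          _ = n.choose a := Nat.choose_symm (by omega)
    calc n.choose c = n.choose (n - c) := hsym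
      _ ≤ n.choose a := h2
      _ ≤ n.choose a * 2 ^ (a + b - c) := Nat.le_mul_of_pos_right _ (Nat.pow_pos (by omega))
  · have hsplit : n.choose (n - c) ≤ n.choose (n - a) * (n - (n - a)).choose ((n - c) - (n - a)) :=
      aux_split n (n - c) (n - a) hd.le (Nat.sub_le n c)
    have hna : n - (n - a) = a := by omega
    rw [hna] at hsplit
    have h2 : a.choose ((n - c) - (n - a)) ≤ 2 ^ a := aux_two_pow a _
    have h3 : a ≤ a + b - c := by omega
    calc n.choose c = n.choose (n - c) := hsym
      _ ≤ n.choose (n - a) * a.choose ((n - c) - (n - a)) := hsplit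
      _ = n.choose a * a.choose ((n - c) - (n - a)) := by rw [Nat.choose_symm (by omega)]
      _ ≤ n.choose a * 2 ^ a := Nat.mul_le_mul_left _ h2
      _ ≤ n.choose a * 2 ^ (a + b - c) := Nat.mul_le_mul_left _ (Nat.pow_le_pow_right (by omega) h3)

/-- Key natural-number inequality. -/
lemma key (r n a b c M : ℕ) (hr : 1 ≤ r) (hn : 1 ≤ n) (hab : a ≤ b) (hbn : b ≤ n)
    (hcn : c ≤ n) (hc2 : c ≤ a + b) (hc1 : b ≤ a + c) (h2n : r = 1 → a + b + c ≤ 2 * n)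
    (hM1 : n - a ≤ M) (hM2 : b ≤ M) :
    n * (n.choose c * r ^ c) ≤ M * (n.choose a * r ^ a) * (n.choose b * r ^ b) := by
  have han : a ≤ n := hab.trans hbn
  rcases le_or_gt (a + b) n with habn | habn
  · have hL1 := L1 r n a b c hr hab habn hc1 hc2
    calc n * (n.choose c * r ^ c)
        ≤ n * ((n - 1).choose a * r ^ a * (n.choose b * r ^ b)) := Nat.mul_le_mul_left n hL1
      _ = (n * (n - 1).choose a) * r ^ a * (n.choose b * r ^ b) := by ring
      _ = ((n - a) * n.choose a) * r ^ a * (n.choose b * r ^ b) := by rw [idA n a hn]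
      _ ≤ (M * n.choose a) * r ^ a * (n.choose b * r ^ b) := by gcongr
      _ = M * (n.choose a * r ^ a) * (n.choose b * r ^ b) := by ring
  · have hb : 1 ≤ b := by omega
    rcases le_or_gt (a + b + c) (2 * n) with hcc | hcc
    · have hL := L1 r n (n - b) (n - a) c hr (by omega) (by omega) (by omega) (by omega)
      have e1 : (n - 1).choose (n - b) = (n - 1).choose (b - 1) := by
        have hs := Nat.choose_symm (show b - 1 ≤ n - 1 by omega)
        have he : (n - 1) - (b - 1) = n - b := by omega
        rw [he] at hs
        exact hs
      have e2 : n.choose (n - a) = n.choose a := Nat.choose_symm han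
      rw [e1, e2] at hL
      calc n * (n.choose c * r ^ c)
          ≤ n * ((n - 1).choose (b - 1) * r ^ (n - b) * (n.choose a * r ^ (n - a))) :=
            Nat.mul_le_mul_left n hL
        _ = (n * (n - 1).choose (b - 1)) * n.choose a * (r ^ (n - b) * r ^ (n - a)) := by ring
        _ = (b * n.choose b) * n.choose a * r ^ ((n - b) + (n - a)) := by
            rw [idB n b hn hb, pow_add]
        _ ≤ (M * n.choose b) * n.choose a * r ^ (a + b) := by
            gcongr <;> omega
        _ = M * (n.choose a * r ^ a) * (n.choose b * r ^ b) := by rw [pow_add]; ring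
    · have hr2 : 2 ≤ r := by
        rcases Nat.lt_or_ge r 2 with h | h
        · have := h2n (by omega); omega
        · exact h
      have hcl : n.choose c ≤ n.choose a * 2 ^ (a + b - c) := claim n a b c hab hbn hcn (by omega)
      have hnb : n ≤ b * n.choose b := by
        have h1 : 1 ≤ (n - 1).choose (b - 1) := Nat.choose_pos (by omega)
        calc n = n * 1 := (mul_one _).symm
          _ ≤ n * (n - 1).choose (b - 1) := Nat.mul_le_mul_left n h1
          _ = b * n.choose b := idB n b hn hb
      calc n * (n.choose c * r ^ c)
          ≤ n * ((n.choose a * 2 ^ (a + b - c)) * r ^ c) := by gcongr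
        _ ≤ n * ((n.choose a * r ^ (a + b - c)) * r ^ c) := by gcongr <;> omega
        _ = n * (n.choose a * r ^ ((a + b - c) + c)) := by rw [pow_add]; ring
        _ = n * (n.choose a * r ^ (a + b)) := by rw [Nat.sub_add_cancel hc2]
        _ ≤ (b * n.choose b) * (n.choose a * r ^ (a + b)) := Nat.mul_le_mul_right _ hnb
        _ ≤ (M * n.choose b) * (n.choose a * r ^ (a + b)) := by gcongr
        _ = M * (n.choose a * r ^ a) * (n.choose b * r ^ b) := by rw [pow_add]; ring

/-- For a field with two elements, the three supports cannot overlap pairwise everywhere. -/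
lemma aux_card2 {F : Type*} [Field F] [Fintype F] [DecidableEq F] (hF : Fintype.card F = 2)
    {n : ℕ} (x y : Fin n → F) :
    hammingNorm x + hammingNorm y + hammingNorm (x + y) ≤ 2 * n := by
  classical
  have huniq : ∀ u v : F, u ≠ 0 → v ≠ 0 → u = v := by
    intro u v hu hv
    by_contra h
    have hcard : ({0, u, v} : Finset F).card = 3 := by
      rw [Finset.card_insert_of_notMem (by simp [Ne.symm hu, Ne.symm hv]),
        Finset.card_insert_of_notMem (by simp [h]), Finset.card_singleton]
    have hle := Finset.card_le_card (Finset.subset_univ ({0, u, v} : Finset F))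
    rw [hcard, Finset.card_univ, hF] at hle
    omega
  set Sx := Finset.univ.filter (fun i => x i ≠ 0) with hSx
  set Sy := Finset.univ.filter (fun i => y i ≠ 0) with hSy
  set Sz := Finset.univ.filter (fun i => (x + y) i ≠ 0) with hSz
  have hx : hammingNorm x = Sx.card := rfl
  have hy : hammingNorm y = Sy.card := rfl
  have hz : hammingNorm (x + y) = Sz.card := rfl
  have hsub : Sx ∩ Sy ⊆ Szᶜ := by
    intro i hi
    rw [Finset.mem_inter] at hi
    have hxi : x i ≠ 0 := (Finset.mem_filter.mp hi.1).2
    have hyi : y i ≠ 0 := (Finset.mem_filter.mp hi.2).2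
    rw [Finset.mem_compl, hSz, Finset.mem_filter]
    rintro ⟨-, hzi⟩
    have heq : x i + y i = x i := huniq _ _ (by simpa using hzi) hxi
    exact hyi (add_eq_left.mp heq)
  have hunion : Sx.card + Sy.card = (Sx ∪ Sy).card + (Sx ∩ Sy).card :=
    (Finset.card_union_add_card_inter _ _).symm
  have h1 : (Sx ∪ Sy).card ≤ n := by
    have := Finset.card_le_univ (Sx ∪ Sy)
    simpa using this
  have h2 : (Sx ∩ Sy).card ≤ Szᶜ.card := Finset.card_le_card hsub
  have h3 : Szᶜ.card = n - Sz.card := by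
    rw [Finset.card_compl, Fintype.card_fin]
  have h4 : Sz.card ≤ n := by
    have := Finset.card_le_univ Sz
    simpa using this
  omega

/-- Let `F` be a finite field with `q` elements, `n ≥ 1`, and `x, y ∈ F^n`.
Then `binom(n, wt(x+y))·(q-1)^{wt(x+y)} ≤ β(wt(x), wt(y)) · binom(n, wt(x))·(q-1)^{wt(x)}
· binom(n, wt(y))·(q-1)^{wt(y)}`, where `β(w₁, w₂) = max{w₁, n−w₁, w₂, n−w₂}/n`
(an inequality of real numbers); this is the exponentiated triangle-type inequality
`q^{ew(x+y)} ≤ β(wt(x),wt(y))·q^{ew(x)+ew(y)}` for entropy weight. -/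
theorem entropy_weight_exponentiated_triangle_inequality
    (F : Type*) [Field F] [Fintype F] [DecidableEq F] (q n : ℕ)
    (hq : Fintype.card F = q) (hn : 1 ≤ n) (x y : Fin n → F) :
    ((n.choose (hammingNorm (x + y)) * (q - 1) ^ hammingNorm (x + y) : ℕ) : ℝ) ≤
      ((max (max (hammingNorm x) (n - hammingNorm x))
          (max (hammingNorm y) (n - hammingNorm y)) : ℕ) : ℝ) / (n : ℝ) *
        ((n.choose (hammingNorm x) * (q - 1) ^ hammingNorm x : ℕ) : ℝ) *
        ((n.choose (hammingNorm y) * (q - 1) ^ hammingNorm y : ℕ) : ℝ) := by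
  classical
  set a := hammingNorm x with ha
  set b := hammingNorm y with hb
  set c := hammingNorm (x + y) with hc
  set M := max (max a (n - a)) (max b (n - b)) with hM
  have hq2 : 2 ≤ q := hq ▸ Fintype.one_lt_card
  have hr : 1 ≤ q - 1 := by omega
  have han : a ≤ n := by
    have := hammingNorm_le_card_fintype (x := x); simpa using this
  have hbn : b ≤ n := by
    have := hammingNorm_le_card_fintype (x := y); simpa using this
  have hcn : c ≤ n := by
    have := hammingNorm_le_card_fintype (x := x + y); simpa using this
  have hdist : ∀ u v : Fin n → F, hammingNorm (u + v) ≤ hammingNorm u + hammingNorm v := by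
    intro u v
    calc hammingNorm (u + v) = hammingDist (u + v) 0 := (hammingDist_zero_right _).symm
      _ ≤ hammingDist (u + v) v + hammingDist v 0 := hammingDist_triangle _ _ _
      _ = hammingNorm u + hammingNorm v := by
          rw [hammingDist_zero_right, hammingDist_eq_hammingNorm]
          simp
          simp [hammingNorm]
  have hneg : ∀ u : Fin n → F, hammingNorm (-u) = hammingNorm u := by
    intro u; simp [hammingNorm]
  have hc2 : c ≤ a + b := hdist x y
  have hb2 : b ≤ a + c := by
    have h := hdist (x + y) (-x)
    rw [show x + y + (-x) = y from by abel, hneg] at h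
    omega
  have ha2 : a ≤ b + c := by
    have h := hdist (x + y) (-y)
    rw [show x + y + (-y) = x from by abel, hneg] at h
    omega
  have h2n : q - 1 = 1 → a + b + c ≤ 2 * n := by
    intro h
    have hF2 : Fintype.card F = 2 := by omega
    exact aux_card2 hF2 x y
  have HK : n * (n.choose c * (q - 1) ^ c) ≤
      M * (n.choose a * (q - 1) ^ a) * (n.choose b * (q - 1) ^ b) := by
    rcases le_total a b with hab | hab
    · exact key (q - 1) n a b c M hr hn hab hbn hcn hc2 hb2 h2n
        (le_trans (le_max_right _ _) (le_max_left _ _))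
        (le_trans (le_max_left _ _) (le_max_right _ _))
    · have := key (q - 1) n b a c M hr hn hab han hcn (by omega) (by omega)
        (fun h => by have := h2n h; omega)
        (le_trans (le_max_right _ _) (le_max_right _ _))
        (le_trans (le_max_left _ _) (le_max_left _ _))
      calc n * (n.choose c * (q - 1) ^ c)
          ≤ M * (n.choose b * (q - 1) ^ b) * (n.choose a * (q - 1) ^ a) := this
        _ = M * (n.choose a * (q - 1) ^ a) * (n.choose b * (q - 1) ^ b) := by ring
  have hn0 : (0 : ℝ) < (n : ℝ) := by exact_mod_cast hn
  rw [div_mul_eq_mul_div, div_mul_eq_mul_div, le_div_iff₀ hn0]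
  calc ((n.choose c * (q - 1) ^ c : ℕ) : ℝ) * (n : ℝ)
      = ((n * (n.choose c * (q - 1) ^ c) : ℕ) : ℝ) := by push_cast; ring
    _ ≤ ((M * (n.choose a * (q - 1) ^ a) * (n.choose b * (q - 1) ^ b) : ℕ) : ℝ) :=
        Nat.cast_le.mpr HK
    _ = (M : ℝ) * ((n.choose a * (q - 1) ^ a : ℕ) : ℝ) * ((n.choose b * (q - 1) ^ b : ℕ) : ℝ) := by
        push_cast; ring
end

section
/- Let F be a finite field with q elements, n ≥ 1, and x, y, z ∈ F^n. Then ed(x,z) ≤ ed(x,y) + ed(y,z), where ed(u,v) = log_q(binom(n, wt(u−v))·(q-1)^{wt(u−v)}). -/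
open Finset

section aux

variable {F : Type*} [Field F] [Fintype F] [DecidableEq F] {n : ℕ}

private lemma hn_comp_perm (π : Equiv.Perm (Fin n)) (t : Fin n → F) :
    hammingNorm (fun i => t (π i)) = hammingNorm t := by
  simp only [hammingNorm]
  apply Finset.card_bij (fun i _ => π i)
  · intro a ha
    simp only [mem_filter, mem_univ, true_and] at ha ⊢
    exact ha
  · intro a _ b _ hab
    exact π.injective hab
  · intro b hb
    simp only [mem_filter, mem_univ, true_and] at hb ⊢
    exact ⟨π.symm b, by simpa using hb, by simp⟩

private lemma exists_transform {w0 w : Fin n → F} (h : hammingNorm w0 = hammingNorm w)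
    {u v : Fin n → F} (huv : u + v = w0) :
    ∃ u' v' : Fin n → F, hammingNorm u' = hammingNorm u ∧ hammingNorm v' = hammingNorm v ∧
      u' + v' = w := by
  have hcard : Fintype.card {i // w i ≠ 0} = Fintype.card {i // w0 i ≠ 0} := by
    simp only [Fintype.card_subtype]
    exact h.symm
  have hcard' : Fintype.card {i // ¬ w i ≠ 0} = Fintype.card {i // ¬ w0 i ≠ 0} := by
    rw [Fintype.card_subtype_compl (fun i => w i ≠ 0),
      Fintype.card_subtype_compl (fun i => w0 i ≠ 0), hcard]
  let e := Fintype.equivOfCardEq hcard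
  let f := Fintype.equivOfCardEq hcard'
  let π : Equiv.Perm (Fin n) := Equiv.subtypeCongr e f
  have hπpos : ∀ i, w i ≠ 0 → w0 (π i) ≠ 0 := by
    intro i hi
    have : π i = (e ⟨i, hi⟩ : Fin n) := by
      simp [π, Equiv.subtypeCongr, hi]
    rw [this]
    exact (e ⟨i, hi⟩).2
  have hπzero : ∀ i, w i = 0 → w0 (π i) = 0 := by
    intro i hi
    have hi' : ¬ w i ≠ 0 := by simpa using hi
    have : π i = (f ⟨i, hi'⟩ : Fin n) := by
      simp [π, Equiv.subtypeCongr, hi']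
    rw [this]
    exact not_not.mp (f ⟨i, hi'⟩).2
  set s : Fin n → F := fun i => if w i ≠ 0 then w i / w0 (π i) else 1 with hs
  have hsne : ∀ i, s i ≠ 0 := by
    intro i
    by_cases hi : w i ≠ 0
    · simp only [hs, if_pos hi]
      exact div_ne_zero hi (hπpos i hi)
    · have h1 : s i = 1 := if_neg hi
      rw [h1]
      exact one_ne_zero
  refine ⟨fun i => s i * u (π i), fun i => s i * v (π i), ?_, ?_, ?_⟩
  · rw [hammingNorm_comp (fun i (c : F) => s i * c)
      (fun i => mul_right_injective₀ (hsne i)) (fun i => mul_zero _)]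
    exact hn_comp_perm π u
  · rw [hammingNorm_comp (fun i (c : F) => s i * c)
      (fun i => mul_right_injective₀ (hsne i)) (fun i => mul_zero _)]
    exact hn_comp_perm π v
  · funext i
    have : u (π i) + v (π i) = w0 (π i) := congrFun huv (π i)
    show s i * u (π i) + s i * v (π i) = w i
    rw [← mul_add, this]
    by_cases hi : w i ≠ 0
    · rw [hs]
      simp only [if_pos hi]
      rw [div_mul_cancel₀ _ (hπpos i hi)]
    · push_neg at hi
      rw [hπzero i hi, mul_zero, hi]

private lemma key_card_le (u v : Fin n → F) :
    (univ.filter fun w : Fin n → F => hammingNorm w = hammingNorm (u + v)).card ≤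
      (univ.filter fun w : Fin n → F => hammingNorm w = hammingNorm u).card *
      (univ.filter fun w : Fin n → F => hammingNorm w = hammingNorm v).card := by
  classical
  set A := univ.filter fun w : Fin n → F => hammingNorm w = hammingNorm u with hA
  set B := univ.filter fun w : Fin n → F => hammingNorm w = hammingNorm v with hB
  set C := univ.filter fun w : Fin n → F => hammingNorm w = hammingNorm (u + v) with hC
  have hex : ∀ w ∈ C, ∃ p : (Fin n → F) × (Fin n → F),
      p.1 ∈ A ∧ p.2 ∈ B ∧ p.1 + p.2 = w := by
    intro w hw
    have hw' : hammingNorm (u + v) = hammingNorm w := by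
      simp only [hC, mem_filter] at hw
      exact hw.2.symm
    obtain ⟨u', v', h1, h2, h3⟩ := exists_transform hw' (rfl : u + v = u + v)
    exact ⟨(u', v'), by simp [hA, h1], by simp [hB, h2], h3⟩
  choose! g hg1 hg2 hg3 using hex
  have := Finset.card_le_card_of_injOn g
    (fun w hw => Finset.mem_product.mpr ⟨hg1 w hw, hg2 w hw⟩)
    (fun w1 hw1 w2 hw2 hgw => by
      have e1 := hg3 w1 hw1
      have e2 := hg3 w2 hw2
      rw [← e1, ← e2, hgw])
  simpa [Finset.card_product] using this

private lemma card_weight (k : ℕ) :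
    (univ.filter fun w : Fin n → F => hammingNorm w = k).card =
      n.choose k * (Fintype.card F - 1) ^ k := by
  classical
  have hsplit : (univ.filter fun w : Fin n → F => hammingNorm w = k) =
      (univ.powersetCard k).biUnion
        (fun s => Fintype.piFinset fun i => if i ∈ s then univ \ {0} else ({0} : Finset F)) := by
    ext w
    simp only [mem_filter, mem_univ, true_and, mem_biUnion, mem_powersetCard_univ,
      Fintype.mem_piFinset]
    constructor
    · intro hw
      refine ⟨univ.filter fun i => w i ≠ 0, hw, fun i => ?_⟩
      by_cases hi : w i ≠ 0
      · simp [hi]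
      · push_neg at hi
        simp [hi]
    · rintro ⟨s, hs, hmem⟩
      have hsupp : (univ.filter fun i => w i ≠ 0) = s := by
        ext i
        simp only [mem_filter, mem_univ, true_and]
        have := hmem i
        by_cases hi : i ∈ s
        · simp only [if_pos hi, mem_sdiff, mem_singleton] at this
          exact ⟨fun _ => hi, fun _ => this.2⟩
        · simp only [if_neg hi, mem_singleton] at this
          exact ⟨fun h => absurd this h, fun h => absurd h hi⟩
      rw [hammingNorm, hsupp, hs]
  rw [hsplit, Finset.card_biUnion, Finset.sum_congr rfl
      (fun s hs => ?_), Finset.sum_const, Finset.card_powersetCard, Finset.card_univ,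
      Fintype.card_fin, smul_eq_mul]
  · rw [Fintype.card_piFinset]
    have hs' : s.card = k := (mem_powersetCard_univ.mp hs)
    calc (∏ i, (if i ∈ s then univ \ {0} else ({0} : Finset F)).card)
        = ∏ i, (if i ∈ s then Fintype.card F - 1 else 1) := by
          apply Finset.prod_congr rfl
          intro i _
          by_cases hi : i ∈ s
          · simp only [if_pos hi, Finset.card_sdiff_of_subset (by simp : ({0} : Finset F) ⊆ univ),
              Finset.card_univ, Finset.card_singleton]
          · simp [if_neg hi]
      _ = (Fintype.card F - 1) ^ k := by
          rw [Finset.prod_ite_mem, Finset.univ_inter, Finset.prod_const, hs']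
  · intro s hs t ht hst
    simp only [Function.onFun, Finset.disjoint_left]
    intro w hw hw'
    apply hst
    simp only [Fintype.mem_piFinset] at hw hw'
    have key : ∀ (r : Finset (Fin n)),
        (∀ a, w a ∈ if a ∈ r then univ \ ({0} : Finset F) else ({0} : Finset F)) →
        ∀ i, (i ∈ r ↔ w i ≠ 0) := by
      intro r hr i
      by_cases hi : i ∈ r
      · have := hr i
        rw [if_pos hi, mem_sdiff, mem_singleton] at this
        exact ⟨fun _ => this.2, fun _ => hi⟩
      · have := hr i
        rw [if_neg hi, mem_singleton] at this
        exact ⟨fun h => absurd h hi, fun h => absurd this h⟩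
    ext i
    rw [key s hw i, key t hw' i]

end aux

/-- Let `F` be a finite field with `q` elements, `n ≥ 1`, and
`x, y, z ∈ F^n`. Then `ed(x,z) ≤ ed(x,y) + ed(y,z)`, where
`ed(u,v) = log_q(binom(n, wt(u−v))·(q-1)^{wt(u−v)})` (triangle inequality for the
entropy distance; note `wt(u−v)` is the Hamming distance between `u` and `v`). -/
theorem entropy_distance_triangle_inequality
    (F : Type*) [Field F] [Fintype F] [DecidableEq F] (q n : ℕ)
    (hq : Fintype.card F = q) (hn : 1 ≤ n) (x y z : Fin n → F) :
    Real.logb q ((n.choose (hammingDist x z) * (q - 1) ^ hammingDist x z : ℕ) : ℝ) ≤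
      Real.logb q ((n.choose (hammingDist x y) * (q - 1) ^ hammingDist x y : ℕ) : ℝ) +
      Real.logb q ((n.choose (hammingDist y z) * (q - 1) ^ hammingDist y z : ℕ) : ℝ) := by
  have hq2 : 1 < q := hq ▸ Fintype.one_lt_card
  have key := key_card_le (x - y) (y - z)
  rw [card_weight, card_weight, card_weight, hq] at key
  have e1 : hammingNorm (x - y) = hammingDist x y := by
    rw [hammingDist_comm, hammingDist_eq_hammingNorm, neg_add_eq_sub]
  have e2 : hammingNorm (y - z) = hammingDist y z := by
    rw [hammingDist_comm, hammingDist_eq_hammingNorm, neg_add_eq_sub]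
  have e3 : hammingNorm (x - y + (y - z)) = hammingDist x z := by
    rw [sub_add_sub_cancel]
    rw [hammingDist_comm, hammingDist_eq_hammingNorm, neg_add_eq_sub]
  rw [e1, e2, e3] at key
  have hle : ∀ u v : Fin n → F, hammingDist u v ≤ n := by
    intro u v
    simpa using hammingDist_le_card_fintype (x := u) (y := v)
  have hpos : ∀ k : ℕ, k ≤ n → 0 < n.choose k * (q - 1) ^ k := by
    intro k hk
    exact Nat.mul_pos (Nat.choose_pos hk) (Nat.pow_pos (by omega))
  have hA := hpos _ (hle x y)
  have hB := hpos _ (hle y z)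
  have hC := hpos _ (hle x z)
  have hcast : ((n.choose (hammingDist x y) * (q - 1) ^ hammingDist x y) *
      (n.choose (hammingDist y z) * (q - 1) ^ hammingDist y z) : ℕ) =
      ((n.choose (hammingDist x y) * (q - 1) ^ hammingDist x y : ℕ) : ℝ) *
      ((n.choose (hammingDist y z) * (q - 1) ^ hammingDist y z : ℕ) : ℝ) := by
    push_cast
    ring
  calc Real.logb q ((n.choose (hammingDist x z) * (q - 1) ^ hammingDist x z : ℕ) : ℝ)
      ≤ Real.logb q (((n.choose (hammingDist x y) * (q - 1) ^ hammingDist x y) *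
          (n.choose (hammingDist y z) * (q - 1) ^ hammingDist y z) : ℕ) : ℝ) := by
        apply Real.logb_le_logb_of_le (by exact_mod_cast hq2) (by exact_mod_cast hC)
        exact_mod_cast key
    _ = _ := by
        rw [hcast, Real.logb_mul (by positivity) (by positivity)]
end

section
/- Let F be a finite field with q elements and n ≥ 2. The largest cardinality of a linear code C ⊆ F^n all of whose nonzero codewords c satisfy binom(n, wt(c))·(q-1)^{wt(c)} ≥ n·(q-1) equals 2^{n-1} if q = 2, and equals q^n if q ≥ 3. -/
/-- Helper: `n ≤ choose n w` for `1 ≤ w < n`. -/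
lemma choose_ge_of_lt : ∀ n w : ℕ, 1 ≤ w → w < n → n ≤ n.choose w := by
  intro n
  induction n with
  | zero => intro w h1 h2; omega
  | succ n ih =>
    intro w h1 h2
    rcases eq_or_lt_of_le (Nat.lt_succ_iff.mp h2) with h | h
    · rw [h, Nat.choose_succ_self_right]
    · match w, h1 with
      | k + 1, _ =>
        rw [Nat.choose_succ_succ]
        have h3 : n ≤ n.choose (k + 1) := ih (k + 1) (by omega) h
        have h4 : 0 < n.choose k := Nat.choose_pos (by omega)
        have h5 : n.choose k.succ = n.choose (k + 1) := rfl
        omega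

lemma n_le_two_pow_pred (n : ℕ) (hn : 1 ≤ n) : n ≤ 2 ^ (n - 1) := by
  have := Nat.lt_two_pow_self (n := n - 1)
  omega

/-- Let `F` be a finite field with `q` elements and `n ≥ 2`. The largest
cardinality of a linear code `C ⊆ F^n` all of whose nonzero codewords `c` satisfy
`binom(n, wt(c))·(q-1)^{wt(c)} ≥ n·(q-1)` (i.e. `ew(c) ≥ f_{q,n}(1)`) equals `2^{n-1}`
if `q = 2`, and equals `q^n` if `q ≥ 3`. -/
theorem largest_code_with_entropy_distance_f1
    (F : Type*) [Field F] [Fintype F] [DecidableEq F] (q n : ℕ)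
    (hq : Fintype.card F = q) (hn : 2 ≤ n) :
    (q = 2 → IsGreatest
      {m : ℕ | ∃ C : Submodule F (Fin n → F),
        (∀ c ∈ C, c ≠ 0 →
          n * (q - 1) ≤ n.choose (hammingNorm c) * (q - 1) ^ hammingNorm c) ∧
        Nat.card C = m}
      (2 ^ (n - 1))) ∧
    (3 ≤ q → IsGreatest
      {m : ℕ | ∃ C : Submodule F (Fin n → F),
        (∀ c ∈ C, c ≠ 0 →
          n * (q - 1) ≤ n.choose (hammingNorm c) * (q - 1) ^ hammingNorm c) ∧
        Nat.card C = m}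
      (q ^ n)) := by
  have hwle : ∀ c : Fin n → F, hammingNorm c ≤ n := fun c => by
    simpa using (hammingNorm_le_card_fintype (x := c))
  have hwpos : ∀ c : Fin n → F, c ≠ 0 → 1 ≤ hammingNorm c := fun c hc =>
    hammingNorm_pos_iff.mpr hc
  have i0 : Fin n := ⟨0, by omega⟩
  constructor
  · -- q = 2
    intro hq2
    subst hq2
    constructor
    · -- membership: the kernel of the projection onto coordinate 0
      refine ⟨LinearMap.ker (LinearMap.proj (R := F) (φ := fun _ : Fin n => F) i0), ?_, ?_⟩
      · intro c hc hc0
        have hc00 : c i0 = 0 := hc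
        have hlt : hammingNorm c < n := by
          have hsub : ({i | c i ≠ 0} : Finset (Fin n)) ⊆ Finset.univ.erase i0 := by
            intro i hi
            simp only [Finset.mem_filter, Finset.mem_univ, true_and] at hi
            refine Finset.mem_erase.mpr ⟨?_, Finset.mem_univ _⟩
            rintro rfl; exact hi hc00
          have := Finset.card_le_card hsub
          have hcard : (Finset.univ.erase i0).card = n - 1 := by
            rw [Finset.card_erase_of_mem (Finset.mem_univ _)]
            simp
          rw [hcard] at this
          have : hammingNorm c ≤ n - 1 := this
          omega
        simpa using choose_ge_of_lt n (hammingNorm c) (hwpos c hc0) hlt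
      · -- cardinality of the kernel is 2^(n-1)
        have hsurj : Function.Surjective (LinearMap.proj (R := F) (φ := fun _ : Fin n => F) i0) :=
          Function.surjective_eval i0
        have hrank := LinearMap.finrank_range_add_finrank_ker
          (LinearMap.proj (R := F) (φ := fun _ : Fin n => F) i0)
        rw [LinearMap.range_eq_top.mpr hsurj, finrank_top, Module.finrank_self,
          Module.finrank_fin_fun] at hrank
        have hker : Module.finrank F (LinearMap.ker
            (LinearMap.proj (R := F) (φ := fun _ : Fin n => F) i0)) = n - 1 := by omega
        have : Fintype ↥(LinearMap.ker (LinearMap.proj (R := F) (φ := fun _ : Fin n => F) i0)) :=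
          Fintype.ofFinite _
        rw [Nat.card_eq_fintype_card, Module.card_eq_pow_finrank (K := F), hq, hker]
    · -- upper bound
      rintro m ⟨C, hC, rfl⟩
      have hne : C ≠ ⊤ := by
        intro htop
        have hmem : (fun _ : Fin n => (1 : F)) ∈ C := htop ▸ Submodule.mem_top
        have hone : (fun _ : Fin n => (1 : F)) ≠ (0 : Fin n → F) := by
          intro h
          exact one_ne_zero (congrFun h i0)
        have := hC _ hmem hone
        have hnorm : hammingNorm (fun _ : Fin n => (1 : F)) = n := by
          simp [hammingNorm]
        rw [hnorm, Nat.choose_self] at this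
        simp at this
        omega
      have hfr : Module.finrank F C < n := by
        have := Submodule.finrank_lt (K := F) (V := Fin n → F) hne
        rwa [Module.finrank_fin_fun] at this
      have : Fintype ↥C := Fintype.ofFinite ↥C
      rw [Nat.card_eq_fintype_card, Module.card_eq_pow_finrank (K := F), hq]
      exact Nat.pow_le_pow_right (by norm_num) (by omega)
  · -- q ≥ 3
    intro hq3
    constructor
    · refine ⟨⊤, ?_, ?_⟩
      · intro c _ hc0
        set w := hammingNorm c with hw
        have h1 : 1 ≤ w := hwpos c hc0
        have h2 : w ≤ n := hwle c
        rcases lt_or_eq_of_le h2 with h | h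
        · have hch : n ≤ n.choose w := choose_ge_of_lt n w h1 h
          calc n * (q - 1) ≤ n.choose w * (q - 1) ^ 1 := by
                rw [pow_one]; exact Nat.mul_le_mul_right _ hch
            _ ≤ n.choose w * (q - 1) ^ w := Nat.mul_le_mul_left _
                (Nat.pow_le_pow_right (by omega) h1)
        · rw [h, Nat.choose_self, one_mul]
          have : n ≤ (q - 1) ^ (n - 1) := le_trans (n_le_two_pow_pred n (by omega))
            (Nat.pow_le_pow_left (by omega) _)
          calc n * (q - 1) ≤ (q - 1) ^ (n - 1) * (q - 1) := Nat.mul_le_mul_right _ this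
            _ = (q - 1) ^ n := by
              rw [← pow_succ]
              congr 1
              omega
      · rw [Nat.card_congr (Submodule.topEquiv (R := F) (M := Fin n → F)).toEquiv,
          Nat.card_eq_fintype_card, Fintype.card_fun, hq, Fintype.card_fin]
    · rintro m ⟨C, _, rfl⟩
      have : Fintype ↥C := Fintype.ofFinite ↥C
      calc Nat.card C = Fintype.card C := Nat.card_eq_fintype_card
        _ ≤ Fintype.card (Fin n → F) := Fintype.card_le_of_injective _ Subtype.val_injective
        _ = q ^ n := by rw [Fintype.card_fun, hq, Fintype.card_fin]
end

section
/- Let F be a finite field with q elements, n ≥ 1, and let 1 ≤ d₁ ≤ d₂ ≤ n be integers. If C ⊆ F^n is a linear code in which every nonzero codeword has Hamming weight in the interval [d₁, d₂], then |C| ≤ q^{min(n − d₁ + 1, d₂)}. -/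
/-- Singleton-type bound: Let `F` be a finite field with `q` elements,
`n ≥ 1`, and `1 ≤ d₁ ≤ d₂ ≤ n`. If `C ⊆ F^n` is a linear code in which every nonzero
codeword has Hamming weight in `[d₁, d₂]`, then `|C| ≤ q^{min(n − d₁ + 1, d₂)}`. -/
theorem singleton_bound_entropy_distance
    (F : Type*) [Field F] [Fintype F] [DecidableEq F] (q n d₁ d₂ : ℕ)
    (hq : Fintype.card F = q) (hn : 1 ≤ n)
    (hd₁ : 1 ≤ d₁) (hd₁₂ : d₁ ≤ d₂) (hd₂ : d₂ ≤ n)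
    (C : Submodule F (Fin n → F))
    (hC : ∀ c ∈ C, c ≠ 0 → d₁ ≤ hammingNorm c ∧ hammingNorm c ≤ d₂) :
    Nat.card C ≤ q ^ min (n - d₁ + 1) d₂ := by
  classical
  have : Fintype C := Fintype.ofFinite C
  have hcard : Nat.card C = q ^ Module.finrank F C := by
    rw [Nat.card_eq_fintype_card, Module.card_eq_pow_finrank (K := F) (V := C), hq]
  have hq1 : 1 ≤ q := by rw [← hq]; exact Fintype.card_pos
  rw [hcard]
  apply Nat.pow_le_pow_right hq1
  rw [le_min_iff]
  constructor
  · -- Singleton bound: finrank ≤ n - d₁ + 1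
    set m := n - d₁ + 1 with hm
    have hmn : m ≤ n := by omega
    let L : (Fin n → F) →ₗ[F] (Fin m → F) :=
      { toFun := fun v i => v (Fin.castLE hmn i)
        map_add' := fun _ _ => rfl
        map_smul' := fun _ _ => rfl }
    have hinj : Function.Injective (L.comp C.subtype) := by
      rw [← LinearMap.ker_eq_bot, eq_bot_iff]
      intro x hx
      rw [LinearMap.mem_ker] at hx
      by_contra hx0
      have hxne : (x : Fin n → F) ≠ 0 := by
        simpa [Submodule.mem_bot] using hx0
      have hzero : ∀ i : Fin n, (i : ℕ) < m → (x : Fin n → F) i = 0 := by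
        intro i hi
        have := congrFun hx ⟨(i : ℕ), hi⟩
        simpa [L, Fin.castLE, Fin.ext_iff] using this
      have hsub : ({i : Fin n | (x : Fin n → F) i ≠ 0} : Finset (Fin n)) ⊆
          Finset.univ.filter (fun i : Fin n => ¬ (i : ℕ) < m) := by
        intro i hi
        simp only [Finset.mem_filter, Finset.mem_univ, true_and] at hi ⊢
        intro hlt
        exact hi (hzero i hlt)
      have hcardm : ({i : Fin n | (i : ℕ) < m} : Finset (Fin n)).card = m := by
        have : ({i : Fin n | (i : ℕ) < m} : Finset (Fin n)) =
            (Finset.range m).attachFin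
              (fun i hi => lt_of_lt_of_le (Finset.mem_range.mp hi) hmn) := by
          ext i; simp [Finset.mem_attachFin]
        rw [this, Finset.card_attachFin, Finset.card_range]
      have hsplit := Finset.card_filter_add_card_filter_not
        (s := (Finset.univ : Finset (Fin n))) (p := fun i : Fin n => (i : ℕ) < m)
      have hle : hammingNorm (x : Fin n → F) ≤ n - m := by
        have := Finset.card_le_card hsub
        simp only [Finset.card_univ, Fintype.card_fin] at hsplit
        unfold hammingNorm
        omega
      have := (hC x x.2 hxne).1
      omega
    have hle := LinearMap.finrank_le_finrank_of_injective hinj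
    simpa using hle
  · -- finrank ≤ d₂
    by_contra hlt
    push_neg at hlt
    have hpos : 0 < Module.finrank F C := by omega
    have hnt : Nontrivial C := Module.nontrivial_of_finrank_pos hpos
    obtain ⟨c0, hc0⟩ := exists_ne (0 : C)
    have hne : (Finset.univ.filter (fun c : C => c ≠ 0)).Nonempty :=
      ⟨c0, by simp [hc0]⟩
    obtain ⟨c, hcmem, hcmax⟩ := Finset.exists_max_image _
      (fun c : C => hammingNorm (c : Fin n → F)) hne
    have hcne : c ≠ 0 := by simpa using hcmem
    have hcne' : (c : Fin n → F) ≠ 0 := fun h => hcne (Subtype.ext h)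
    set s : Finset (Fin n) := {i : Fin n | (c : Fin n → F) i ≠ 0} with hs
    have hscard : s.card = hammingNorm (c : Fin n → F) := rfl
    have hsle : s.card ≤ d₂ := by
      rw [hscard]; exact (hC c c.2 hcne').2
    -- restriction map to coordinates in s
    let ψ : C →ₗ[F] (s → F) :=
      { toFun := fun v i => (v : Fin n → F) i
        map_add' := fun _ _ => rfl
        map_smul' := fun _ _ => rfl }
    have hrange : Module.finrank F (LinearMap.range ψ) ≤ s.card := by
      have := Submodule.finrank_le (LinearMap.range ψ)
      simpa [Module.finrank_pi] using this
    have hsum := LinearMap.finrank_range_add_finrank_ker ψ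
    have hkerpos : 0 < Module.finrank F (LinearMap.ker ψ) := by omega
    have hntk : Nontrivial (LinearMap.ker ψ) := Module.nontrivial_of_finrank_pos hkerpos
    obtain ⟨x, hx⟩ := exists_ne (0 : LinearMap.ker ψ)
    have hxC : ((x : C) : Fin n → F) ∈ C := (x : C).2
    have hxne : ((x : C) : Fin n → F) ≠ 0 := by
      intro h
      apply hx
      ext
      simpa using congrFun h _
    have hxker : ∀ i : Fin n, (c : Fin n → F) i ≠ 0 → ((x : C) : Fin n → F) i = 0 := by
      intro i hi
      have hmem : i ∈ s := by simp [hs, hi]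
      have := x.2
      rw [LinearMap.mem_ker] at this
      exact congrFun this ⟨i, hmem⟩
    -- y = c + x has weight = wt c + wt x
    set y : C := c + (x : C) with hy
    have hyval : (y : Fin n → F) = (c : Fin n → F) + ((x : C) : Fin n → F) := rfl
    have hdisj : Disjoint ({i : Fin n | (c : Fin n → F) i ≠ 0} : Finset (Fin n))
        ({i : Fin n | ((x : C) : Fin n → F) i ≠ 0} : Finset (Fin n)) := by
      rw [Finset.disjoint_left]
      intro i hi hi'
      simp only [Finset.mem_filter, Finset.mem_univ, true_and] at hi hi'
      exact hi' (hxker i hi)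
    have hunion : ({i : Fin n | (y : Fin n → F) i ≠ 0} : Finset (Fin n)) =
        ({i : Fin n | (c : Fin n → F) i ≠ 0} : Finset (Fin n)) ∪
        ({i : Fin n | ((x : C) : Fin n → F) i ≠ 0} : Finset (Fin n)) := by
      ext i
      simp only [Finset.mem_filter, Finset.mem_univ, true_and, Finset.mem_union, hyval,
        Pi.add_apply]
      by_cases hci : (c : Fin n → F) i = 0
      · simp [hci]
      · simp [hci, hxker i hci]
    have hwty : hammingNorm (y : Fin n → F) =
        hammingNorm (c : Fin n → F) + hammingNorm ((x : C) : Fin n → F) := by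
      unfold hammingNorm
      rw [hunion, Finset.card_union_of_disjoint hdisj]
    have hxwt : 0 < hammingNorm ((x : C) : Fin n → F) := hammingNorm_pos_iff.mpr hxne
    have hyne : y ≠ 0 := by
      intro h
      have : hammingNorm (y : Fin n → F) = 0 := by rw [h]; exact hammingNorm_zero
      omega
    have := hcmax y (by simp [hyne])
    omega
end

section
/- Let n ≥ 4. The largest cardinality of a binary linear code C ⊆ F_2^n in which every nonzero codeword has Hamming weight between 2 and n − 2 equals 2^{n-3} if n is odd, and equals 2^{n-2} if n is even. That is: (a) every such code satisfies the stated cardinality bound, and (b) there exists such a code attaining it. -/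
open Finset

private lemma zmod2_cases (a : ZMod 2) : a = 0 ∨ a = 1 := by revert a; decide

private def indVec {n : ℕ} (F : Finset (Fin n)) : Fin n → ZMod 2 :=
  fun j => if j ∈ F then 1 else 0

private lemma hammingNorm_indVec {n : ℕ} (F : Finset (Fin n)) :
    hammingNorm (indVec F) = F.card := by
  unfold hammingNorm indVec
  congr 1
  ext j
  simp

private lemma indVec_add {n : ℕ} (F G : Finset (Fin n)) :
    indVec F + indVec G = indVec (symmDiff F G) := by
  funext j
  simp only [indVec, Pi.add_apply, Finset.mem_symmDiff]
  by_cases hF : j ∈ F <;> by_cases hG : j ∈ G <;> simp [hF, hG]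
  decide

private lemma indVec_ne_zero {n : ℕ} {F : Finset (Fin n)} (h : F.Nonempty) : indVec F ≠ 0 := by
  obtain ⟨j, hj⟩ := h
  intro h0
  have := congrFun h0 j
  simp [indVec, hj] at this

private lemma notMem_of_card {n : ℕ} {C : Submodule (ZMod 2) (Fin n → ZMod 2)}
    (hC : ∀ c ∈ C, c ≠ 0 → 2 ≤ hammingNorm c ∧ hammingNorm c ≤ n - 2)
    {F : Finset (Fin n)} (hne : F.Nonempty) (hcard : F.card < 2 ∨ n - 2 < F.card) :
    indVec F ∉ C := by
  intro hmem
  have := hC _ hmem (indVec_ne_zero hne)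
  rw [hammingNorm_indVec] at this
  omega

private lemma finset_sd1 {n : ℕ} {i0 i j : Fin n} (hi : i ≠ i0) (hj : j ≠ i0) (hij : i ≠ j) :
    symmDiff (({i0, i}ᶜ) : Finset (Fin n)) ({i0, j}ᶜ) = symmDiff ({i} : Finset (Fin n)) {j} := by
  ext x
  simp only [Finset.mem_symmDiff, Finset.mem_compl, Finset.mem_insert, Finset.mem_singleton]
  by_cases hxi : x = i <;> by_cases hxj : x = j <;> by_cases hx0 : x = i0 <;> simp_all

private lemma finset_sd2 {n : ℕ} {E : Finset (Fin n)} {l : Fin n} (hl : l ∉ E) :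
    symmDiff E ((Eᶜ).erase l) = ({l}ᶜ : Finset (Fin n)) := by
  ext x
  simp only [Finset.mem_symmDiff, Finset.mem_erase, Finset.mem_compl, Finset.mem_singleton]
  by_cases hxl : x = l <;> by_cases hxE : x ∈ E <;> simp_all

private lemma finset_sd3 {n : ℕ} {i j : Fin n} (hij : i ≠ j) :
    symmDiff ({i} : Finset (Fin n)) {j} = {i, j} := by
  ext x
  simp only [Finset.mem_symmDiff, Finset.mem_insert, Finset.mem_singleton]
  by_cases hxi : x = i <;> by_cases hxj : x = j <;> simp_all

private lemma finset_sd4 {n : ℕ} (F : Finset (Fin n)) :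
    symmDiff F (univ : Finset (Fin n)) = Fᶜ := by
  ext x
  simp only [Finset.mem_symmDiff, Finset.mem_univ, Finset.mem_compl]
  tauto

private lemma clique_sum {n : ℕ} (C : Submodule (ZMod 2) (Fin n → ZMod 2))
    (F : Finset (Fin n)) (hF : ∀ i ∈ F, ∀ j ∈ F, indVec {i} + indVec {j} ∈ C)
    (he : Even F.card) : indVec F ∈ C := by
  induction F using Finset.strongInduction with
  | _ F ih =>
    rcases Finset.eq_empty_or_nonempty F with rfl | ⟨a, ha⟩
    · have : indVec (∅ : Finset (Fin n)) = 0 := by funext j; simp [indVec]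
      rw [this]; exact C.zero_mem
    · have hcard : 2 ≤ F.card := by
        rcases he with ⟨r, hr⟩
        have : F.card ≠ 0 := by simp [Finset.card_eq_zero]; exact Finset.nonempty_iff_ne_empty.mp ⟨a, ha⟩
        omega
      have hb : ∃ b ∈ F.erase a, True := by
        have : 0 < (F.erase a).card := by rw [Finset.card_erase_of_mem ha]; omega
        obtain ⟨b, hb⟩ := Finset.card_pos.mp this
        exact ⟨b, hb, trivial⟩
      obtain ⟨b, hb, -⟩ := hb
      have hba : b ≠ a := Finset.ne_of_mem_erase hb
      have hbF : b ∈ F := Finset.mem_of_mem_erase hb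
      set F' := (F.erase a).erase b with hF'
      have hsub : F' ⊂ F := by
        refine Finset.ssubset_iff_of_subset ?_ |>.mpr ⟨a, ha, ?_⟩
        · exact (Finset.erase_subset _ _).trans (Finset.erase_subset _ _)
        · simp [hF']
      have hcard' : F'.card = F.card - 2 := by
        rw [hF', Finset.card_erase_of_mem hb, Finset.card_erase_of_mem ha]; omega
      have he' : Even F'.card := by
        rcases he with ⟨r, hr⟩; exact ⟨r - 1, by omega⟩
      have hmem' : indVec F' ∈ C := by
        apply ih F' hsub
        · intro i hi j hj
          exact hF i (Finset.mem_of_mem_erase (Finset.mem_of_mem_erase hi)) j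
            (Finset.mem_of_mem_erase (Finset.mem_of_mem_erase hj))
        · exact he'
      have hab : indVec {a} + indVec {b} ∈ C := hF a ha b hbF
      have hset : symmDiff F' (symmDiff ({a} : Finset (Fin n)) {b}) = F := by
        ext j
        simp only [Finset.mem_symmDiff, Finset.mem_singleton, hF', Finset.mem_erase]
        by_cases hja : j = a <;> by_cases hjb : j = b <;> simp_all
      have key : indVec F = indVec F' + (indVec {a} + indVec {b}) := by
        rw [indVec_add, indVec_add, hset]
      rw [key]
      exact C.add_mem hmem' hab

private lemma exists_good_pair {n : ℕ} (hn : 4 ≤ n) (hodd : Odd n)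
    (C : Submodule (ZMod 2) (Fin n → ZMod 2))
    (hC : ∀ c ∈ C, c ≠ 0 → 2 ≤ hammingNorm c ∧ hammingNorm c ≤ n - 2) :
    ∃ i j : Fin n, i ≠ j ∧ indVec {i} + indVec {j} ∉ C ∧ indVec ({i, j}ᶜ) ∉ C := by
  classical
  by_contra hcon
  push_neg at hcon
  have hnpos : 0 < n := by omega
  set A : Fin n → Fin n → Prop := fun i j => indVec {i} + indVec {j} ∈ C with hA
  have Arefl : ∀ i, A i i := by
    intro i
    have : indVec {i} + indVec {i} = (0 : Fin n → ZMod 2) := by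
      rw [indVec_add, symmDiff_self]
      funext j; simp [indVec]
    rw [hA]; simp only; rw [this]; exact C.zero_mem
  have Asymm : ∀ i j, A i j → A j i := by
    intro i j h; rw [hA] at *; simpa [add_comm] using h
  have add_self : ∀ x : Fin n → ZMod 2, x + x = 0 := by
    intro x; funext j; simp only [Pi.add_apply, Pi.zero_apply]
    have : ∀ a : ZMod 2, a + a = 0 := by decide
    exact this _
  obtain ⟨i0, -⟩ : ∃ i0 : Fin n, True := ⟨⟨0, hnpos⟩, trivial⟩
  have Atrans : ∀ i j k, A i j → A j k → A i k := by
    intro i j k h1 h2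
    have key : (indVec {i} + indVec {j}) + (indVec {j} + indVec {k})
        = indVec {i} + indVec {k} := by
      have h3 : (indVec {i} + indVec {j}) + (indVec {j} + indVec {k})
          = (indVec {i} + indVec {k}) + (indVec {j} + indVec {j}) := by abel
      rw [h3, add_self, add_zero]
    have := C.add_mem h1 h2
    rw [key] at this
    exact this
  have BB : ∀ i j : Fin n, i ≠ i0 → j ≠ i0 → i ≠ j →
      indVec ({i0, i}ᶜ) ∈ C → indVec ({i0, j}ᶜ) ∈ C → A i j := by
    intro i j hi hj hij h1 h2
    have := C.add_mem h1 h2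
    rw [indVec_add] at this
    have hset := finset_sd1 hi hj hij
    rw [hset, ← indVec_add] at this
    exact this
  set S : Finset (Fin n) := univ.filter (fun i => A i0 i) with hS
  have hScl : ∀ i ∈ S, ∀ j ∈ S, A i j := by
    intro i hi j hj
    rw [hS, Finset.mem_filter] at hi hj
    exact Atrans i i0 j (Asymm _ _ hi.2) hj.2
  have hTcl : ∀ i ∈ Sᶜ, ∀ j ∈ Sᶜ, A i j := by
    intro i hi j hj
    rw [Finset.mem_compl, hS, Finset.mem_filter] at hi hj
    have hAi : ¬ A i0 i := fun h => hi ⟨Finset.mem_univ _, h⟩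
    have hAj : ¬ A i0 j := fun h => hj ⟨Finset.mem_univ _, h⟩
    have hi0 : i ≠ i0 := fun h => hAi (h ▸ Arefl i0)
    have hj0 : j ≠ i0 := fun h => hAj (h ▸ Arefl i0)
    by_cases hij : i = j
    · subst hij; exact Arefl i
    · have h1 : indVec ({i0, i}ᶜ) ∈ C := hcon i0 i (Ne.symm hi0) hAi
      have h2 : indVec ({i0, j}ᶜ) ∈ C := hcon i0 j (Ne.symm hj0) hAj
      exact BB i j hi0 hj0 hij h1 h2
  have final : ∀ E : Finset (Fin n), (∀ i ∈ E, ∀ j ∈ E, A i j) →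
      (∀ i ∈ Eᶜ, ∀ j ∈ Eᶜ, A i j) → Even E.card → False := by
    intro E hEcl hOcl hEven
    have hOcard : Eᶜ.card = n - E.card := by
      rw [Finset.card_compl]; simp
    have hElen : E.card ≤ n := by
      have := Finset.card_le_univ E; simpa using this
    have hOodd : Odd (Eᶜ.card) := by
      rcases hodd with ⟨r, hr⟩
      rcases hEven with ⟨sod, hsod⟩
      rw [hOcard]
      exact ⟨r - sod, by omega⟩
    have hOne : (Eᶜ).Nonempty := by
      rw [← Finset.card_pos]
      rcases hOodd with ⟨r, hr⟩; omega
    obtain ⟨l, hl⟩ := hOne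
    have hmemE : indVec E ∈ C := clique_sum C E (fun i hi j hj => hEcl i hi j hj) hEven
    have hmemO : indVec ((Eᶜ).erase l) ∈ C := by
      apply clique_sum C _ (fun i hi j hj =>
        hOcl i (Finset.mem_of_mem_erase hi) j (Finset.mem_of_mem_erase hj))
      rw [Finset.card_erase_of_mem hl]
      rcases hOodd with ⟨r, hr⟩
      exact ⟨r, by omega⟩
    have := C.add_mem hmemE hmemO
    rw [indVec_add] at this
    have hset : symmDiff E ((Eᶜ).erase l) = ({l}ᶜ : Finset (Fin n)) :=
      finset_sd2 (by rwa [← Finset.mem_compl])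
    rw [hset] at this
    have hne : indVec ({l}ᶜ : Finset (Fin n)) ≠ 0 := by
      apply indVec_ne_zero
      rw [← Finset.card_pos, Finset.card_compl]
      simp only [Finset.card_singleton, Fintype.card_fin]
      omega
    have hb := (hC _ this hne).2
    rw [hammingNorm_indVec, Finset.card_compl] at hb
    simp only [Finset.card_singleton, Fintype.card_fin] at hb
    omega
  rcases Nat.even_or_odd S.card with hSE | hSO
  · exact final S hScl hTcl hSE
  · apply final Sᶜ hTcl (by rw [compl_compl]; exact hScl)
    rcases hSO with ⟨r, hr⟩
    rcases hodd with ⟨m, hm⟩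
    rw [Finset.card_compl]
    simp only [Fintype.card_fin]
    have := Finset.card_le_univ S
    simp only [Finset.card_univ, Fintype.card_fin] at this
    exact ⟨m - r, by omega⟩

private lemma card_bound {n m : ℕ} (C : Submodule (ZMod 2) (Fin n → ZMod 2))
    (v : Fin m → (Fin n → ZMod 2))
    (hv : ∀ c : Fin m → ZMod 2, (∑ t, c t • v t) ∈ C → ∀ t, c t = 0) :
    Nat.card C * 2 ^ m ≤ 2 ^ n := by
  have hinj : Function.Injective
      (fun p : C × (Fin m → ZMod 2) => (p.1 : Fin n → ZMod 2) + ∑ t, p.2 t • v t) := by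
    rintro ⟨x, c⟩ ⟨x', c'⟩ h
    simp only at h
    have hd : ((x : Fin n → ZMod 2) - x') = ∑ t, (c' t - c t) • v t := by
      have h1 : (x : Fin n → ZMod 2) - x' = (∑ t, c' t • v t) - ∑ t, c t • v t := by
        linear_combination (norm := abel) h
      rw [h1, ← Finset.sum_sub_distrib]
      congr 1; funext t; rw [sub_smul]
    have hmem : (∑ t, (c' t - c t) • v t) ∈ C := by
      rw [← hd]; exact C.sub_mem x.2 x'.2
    have hc : ∀ t, c' t - c t = 0 := hv _ hmem
    have hcc : c = c' := by funext t; exact (sub_eq_zero.mp (hc t)).symm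
    have hxx : (x : Fin n → ZMod 2) = x' := by
      have : ((x : Fin n → ZMod 2) - x') = 0 := by
        rw [hd]
        apply Finset.sum_eq_zero
        intro t _
        rw [hc t, zero_smul]
      exact sub_eq_zero.mp this
    exact Prod.ext (Subtype.ext hxx) hcc
  have hle := Nat.card_le_card_of_injective _ hinj
  rw [Nat.card_prod] at hle
  simpa [Nat.card_eq_fintype_card] using hle

private def phiFun {n k : ℕ} (h : k < n) (y : Fin k → ZMod 2) : Fin n → ZMod 2 :=
  fun j => if hj : (j : ℕ) < k then y ⟨j, hj⟩ else if (j : ℕ) = k then ∑ i, y i else 0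

private def phi (n k : ℕ) (h : k < n) : (Fin k → ZMod 2) →ₗ[ZMod 2] (Fin n → ZMod 2) where
  toFun := phiFun h
  map_add' := by
    intro y z
    funext j
    simp only [phiFun, Pi.add_apply]
    split_ifs <;> simp [Finset.sum_add_distrib]
  map_smul' := by
    intro a y
    funext j
    simp only [phiFun, Pi.smul_apply, RingHom.id_apply, smul_eq_mul]
    split_ifs <;> simp [Finset.mul_sum]

private lemma phi_injective {n k : ℕ} (h : k < n) : Function.Injective (phi n k h) := by
  intro y z hyz
  funext i
  have := congrFun hyz ⟨i.1, lt_trans i.2 h⟩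
  simpa [phi, phiFun, i.2] using this

private lemma sum_eq_card {k : ℕ} (y : Fin k → ZMod 2) :
    (∑ i, y i) = (hammingNorm y : ZMod 2) := by
  classical
  rw [hammingNorm, ← Finset.sum_filter_ne_zero Finset.univ]
  have h1 : ∀ i ∈ Finset.univ.filter (fun i => y i ≠ 0), y i = 1 := by
    intro i hi
    rcases zmod2_cases (y i) with h | h
    · rw [Finset.mem_filter] at hi; exact absurd h hi.2
    · exact h
  rw [Finset.sum_congr rfl h1, Finset.sum_const, nsmul_eq_mul, mul_one]

private lemma hammingNorm_phi {n k : ℕ} (h : k < n) (y : Fin k → ZMod 2) :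
    hammingNorm (phi n k h y) = hammingNorm y + (if (∑ i, y i) ≠ 0 then 1 else 0) := by
  classical
  have hkn : k ≤ n := le_of_lt h
  set B : Finset (Fin n) := (Finset.univ.filter (fun i : Fin k => y i ≠ 0)).map
    (Fin.castLEEmb hkn) with hB
  have hmemB : ∀ j : Fin n, j ∈ B ↔ ∃ hj : (j : ℕ) < k, y ⟨j, hj⟩ ≠ 0 := by
    intro j
    rw [hB, Finset.mem_map]
    constructor
    · rintro ⟨i, hi, rfl⟩
      simp only [Finset.mem_filter] at hi
      exact ⟨i.2, by simpa using hi.2⟩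
    · rintro ⟨hj, hy⟩
      exact ⟨⟨j, hj⟩, by simpa using hy, by simp [Fin.castLEEmb, Fin.castLE]⟩
  have hA : (Finset.univ.filter (fun j : Fin n => phi n k h y j ≠ 0))
      = if (∑ i, y i) ≠ 0 then insert ⟨k, h⟩ B else B := by
    ext j
    simp only [Finset.mem_filter, Finset.mem_univ, true_and]
    by_cases hj : (j : ℕ) < k
    · have hjne : j ≠ ⟨k, h⟩ := by
        intro hjeq; rw [hjeq] at hj; simp at hj
      have : phi n k h y j = y ⟨j, hj⟩ := by simp [phi, phiFun, hj]
      rw [this]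
      split_ifs with hs <;> simp [Finset.mem_insert, hjne, hmemB j, hj]
    · by_cases hjk : (j : ℕ) = k
      · have hjeq : j = ⟨k, h⟩ := by ext; exact hjk
        have : phi n k h y j = ∑ i, y i := by simp [phi, phiFun, hj, hjk]
        rw [this, hjeq]
        have hnB : (⟨k, h⟩ : Fin n) ∉ B := by
          rw [hmemB]; rintro ⟨hc, -⟩; simp at hc
        split_ifs with hs <;> simp [Finset.mem_insert, hnB, hs, hmemB]
      · have : phi n k h y j = 0 := by simp [phi, phiFun, hj, hjk]
        rw [this]
        have hnB : j ∉ B := by rw [hmemB]; rintro ⟨hc, -⟩; exact hj hc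
        split_ifs with hs <;> simp [Finset.mem_insert, hnB]
        intro hjeq; rw [hjeq] at hjk; exact hjk rfl
  rw [hammingNorm, hA]
  have hcardB : B.card = hammingNorm y := by
    rw [hB, Finset.card_map, hammingNorm]
  split_ifs with hs
  · rw [Finset.card_insert_of_notMem (by rw [hmemB]; rintro ⟨hc, -⟩; simp at hc), hcardB]
  · rw [hcardB, Nat.add_zero]

/-- Let `n ≥ 4`. The largest cardinality of a binary linear code
`C ⊆ F₂^n` in which every nonzero codeword has Hamming weight between `2` and `n − 2`
equals `2^{n-3}` if `n` is odd, and `2^{n-2}` if `n` is even. -/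
theorem largest_binary_code_with_weights_between_two_and_n_sub_two
    (n : ℕ) (hn : 4 ≤ n) :
    IsGreatest
      {m : ℕ | ∃ C : Submodule (ZMod 2) (Fin n → ZMod 2),
        (∀ c ∈ C, c ≠ 0 → 2 ≤ hammingNorm c ∧ hammingNorm c ≤ n - 2) ∧
        Nat.card C = m}
      (if Odd n then 2 ^ (n - 3) else 2 ^ (n - 2)) := by
  classical
  constructor
  · -- membership : construction
    set k : ℕ := if Odd n then n - 3 else n - 2 with hk
    have hkn : k < n := by rw [hk]; split_ifs <;> omega
    refine ⟨LinearMap.range (phi n k hkn), ?_, ?_⟩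
    · rintro c hc hcne
      obtain ⟨y, rfl⟩ := LinearMap.mem_range.mp hc
      have hy : y ≠ 0 := by rintro rfl; simp at hcne
      have hw1 : 1 ≤ hammingNorm y := by
        by_contra hcon
        push_neg at hcon
        exact hy (hammingNorm_eq_zero.mp (by omega))
      have hw2 : hammingNorm y ≤ k := by
        have := hammingNorm_le_card_fintype (x := y)
        simpa using this
      rw [hammingNorm_phi, sum_eq_card]
      have hcast : ((hammingNorm y : ZMod 2) ≠ 0) ↔ ¬ (2 ∣ hammingNorm y) := by
        rw [Ne, ZMod.natCast_eq_zero_iff]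
      by_cases hpar : 2 ∣ hammingNorm y
      · rw [if_neg (by rw [hcast]; exact fun h => h hpar)]
        constructor
        · obtain ⟨r, hr⟩ := hpar; omega
        · have hk2 : k ≤ n - 2 := by rw [hk]; split_ifs <;> omega
          omega
      · rw [if_pos (hcast.mpr hpar)]
        constructor
        · omega
        · obtain ⟨r, hr⟩ : Odd (hammingNorm y) := Nat.odd_iff.mpr (by omega)
          rcases Nat.even_or_odd n with hne | hno
          · have hkval : k = n - 2 := by
              rw [hk, if_neg (by simpa [Nat.not_odd_iff_even] using hne)]
            obtain ⟨m, hm⟩ := hne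
            omega
          · have hkval : k = n - 3 := by rw [hk, if_pos hno]
            omega
    · have e := LinearEquiv.ofInjective (phi n k hkn) (phi_injective hkn)
      rw [Nat.card_congr e.toEquiv.symm]
      simp only [Nat.card_eq_fintype_card, Fintype.card_fun, ZMod.card, Fintype.card_fin]
      rw [hk]
      split_ifs <;> rfl
  · -- upper bound
    rintro m ⟨C, hC, rfl⟩
    by_cases hodd : Odd n
    · rw [if_pos hodd]
      obtain ⟨i, j, hij, hp, hq⟩ := exists_good_pair hn hodd C hC
      have hbound := card_bound C ![indVec {i}, indVec {j}, indVec univ] ?_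
      · have h2n : 2 ^ n = 2 ^ (n - 3) * 2 ^ 3 := by
          rw [← pow_add]; congr 1; omega
        rw [h2n] at hbound
        exact Nat.le_of_mul_le_mul_right hbound (by positivity)
      · intro c hc
        rcases zmod2_cases (c 0) with h0 | h0 <;> rcases zmod2_cases (c 1) with h1 | h1 <;>
          rcases zmod2_cases (c 2) with h2 | h2
        · intro t; fin_cases t <;> assumption
        all_goals {
          exfalso
          rw [Fin.sum_univ_three] at hc
          simp only [h0, h1, h2, Matrix.cons_val_zero, Matrix.cons_val_one, Matrix.head_cons,
            Matrix.cons_val_two, Matrix.tail_cons, zero_smul, one_smul, zero_add, add_zero] at hc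
          first
          | exact notMem_of_card hC (Finset.singleton_nonempty _)
              (Or.inl (by simp)) hc
          | exact notMem_of_card hC ⟨i, Finset.mem_univ i⟩
              (by right; simp [Finset.card_univ]; omega) hc
          | (rw [indVec_add, finset_sd3 hij] at hc; exact hp (by rwa [indVec_add, finset_sd3 hij]))
          | (rw [indVec_add, finset_sd4] at hc;
             exact notMem_of_card hC (by
                rw [← Finset.card_pos, Finset.card_compl]
                simp only [Finset.card_singleton, Fintype.card_fin]; omega)
              (by right; rw [Finset.card_compl]; simp only [Finset.card_singleton, Fintype.card_fin]; omega) hc)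
          | (rw [indVec_add, indVec_add, finset_sd3 hij, finset_sd4] at hc;
             exact hq hc)
        }
    · rw [if_neg hodd]
      have h0n : (0 : ℕ) < n := by omega
      have hbound := card_bound C ![indVec {⟨0, h0n⟩}, indVec univ] ?_
      · have h2n : 2 ^ n = 2 ^ (n - 2) * 2 ^ 2 := by
          rw [← pow_add]; congr 1; omega
        rw [h2n] at hbound
        exact Nat.le_of_mul_le_mul_right hbound (by positivity)
      · intro c hc
        rcases zmod2_cases (c 0) with h0 | h0 <;> rcases zmod2_cases (c 1) with h1 | h1
        · intro t; fin_cases t <;> assumption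
        all_goals {
          exfalso
          rw [Fin.sum_univ_two] at hc
          simp only [h0, h1, Matrix.cons_val_zero, Matrix.cons_val_one, Matrix.head_cons,
            zero_smul, one_smul, zero_add, add_zero] at hc
          first
          | exact notMem_of_card hC (Finset.singleton_nonempty _)
              (Or.inl (by simp)) hc
          | exact notMem_of_card hC ⟨⟨0, h0n⟩, Finset.mem_univ _⟩
              (by right; simp [Finset.card_univ]; omega) hc
          | (rw [indVec_add, finset_sd4] at hc;
             exact notMem_of_card hC (by
                rw [← Finset.card_pos, Finset.card_compl]
                simp only [Finset.card_singleton, Fintype.card_fin]; omega)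
              (by right; rw [Finset.card_compl]; simp only [Finset.card_singleton, Fintype.card_fin]; omega) hc)
        }
end

section
/- Let F be a finite field with q elements, k ≥ 1, n ≥ 1, and let f : F^k → F^n be a linear map of full rank (rank(f) = min(k,n)). If q = 2, then there exists a nonzero x ∈ F^k with ew_k(x) + ew_n(f(x)) ≤ log_2(binom(n, ⌈(n−1)/2⌉)). If q ≥ 3, then there exists a nonzero x ∈ F^k with ew_k(x) + ew_n(f(x)) ≤ log_q(k·(q-1)) + log_q(binom(n, m)·(q-1)^m), where m = ⌈((q-1)·n − 1)/q⌉. -/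
/-- Step-down: if `(q-1)*n ≤ q*a + 1` then the weight-enumerator term decreases. -/
lemma term_step_down (q n a : ℕ) (h : (q - 1) * n ≤ q * a + 1) :
    n.choose (a + 1) * (q - 1) ^ (a + 1) ≤ n.choose a * (q - 1) ^ a := by
  have key : (n - a) * (q - 1) ≤ a + 1 := by
    rcases le_or_gt n a with hna | hna
    · simp [Nat.sub_eq_zero_of_le hna]
    · rcases Nat.lt_or_ge q 1 with hq | hq
      · interval_cases q <;> simp at h ⊢ <;> omega
      obtain ⟨b, hb⟩ := Nat.exists_eq_add_of_lt hna
      rcases Nat.exists_eq_add_of_le hq with ⟨p, hp⟩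
      subst hb hp
      have hn : a + b + 1 - a = b + 1 := by omega
      rw [hn]
      have e1 : (1 + p - 1) = p := by omega
      rw [e1] at h ⊢
      have e2 : p * (a + b + 1) = p * a + p * (b + 1) := by ring
      have e3 : (1 + p) * a + 1 = p * a + (a + 1) := by ring
      rw [e2, e3] at h
      have h4 : p * (b + 1) ≤ a + 1 := Nat.le_of_add_le_add_left h
      rw [Nat.mul_comm]
      exact h4
  have hrec : n.choose (a + 1) * (q - 1) ^ (a + 1) * (a + 1)
      = n.choose a * (q - 1) ^ a * ((n - a) * (q - 1)) := by
    rw [pow_succ]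
    calc n.choose (a + 1) * ((q - 1) ^ a * (q - 1)) * (a + 1)
        = n.choose (a + 1) * (a + 1) * ((q - 1) ^ a * (q - 1)) := by ring
      _ = n.choose a * (n - a) * ((q - 1) ^ a * (q - 1)) := by
          rw [Nat.choose_succ_right_eq]
      _ = n.choose a * (q - 1) ^ a * ((n - a) * (q - 1)) := by ring
  have hle : n.choose (a + 1) * (q - 1) ^ (a + 1) * (a + 1)
      ≤ n.choose a * (q - 1) ^ a * (a + 1) := by
    rw [hrec]
    exact Nat.mul_le_mul_left _ key
  exact Nat.le_of_mul_le_mul_right hle (Nat.succ_pos a)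

/-- Step-up: if `q*a + 2 ≤ (q-1)*n` then the weight-enumerator term increases. -/
lemma term_step_up (q n a : ℕ) (hq : 2 ≤ q) (h : q * a + 2 ≤ (q - 1) * n) :
    n.choose a * (q - 1) ^ a ≤ n.choose (a + 1) * (q - 1) ^ (a + 1) := by
  rcases Nat.exists_eq_add_of_le (by omega : 1 ≤ q) with ⟨p, hp⟩
  subst hp
  have hp1 : 1 ≤ p := by omega
  have e1 : (1 + p - 1) = p := by omega
  rw [e1] at h ⊢
  have hna : a < n := by
    by_contra hcon
    push_neg at hcon
    have h1 : p * n ≤ p * a := Nat.mul_le_mul_left _ hcon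
    have h2 : (1 + p) * a + 2 ≤ p * a := le_trans h h1
    nlinarith
  obtain ⟨b, hb⟩ := Nat.exists_eq_add_of_lt hna
  have key : a + 1 ≤ (n - a) * p := by
    subst hb
    have hn : a + b + 1 - a = b + 1 := by omega
    rw [hn]
    have e2 : p * (a + b + 1) = p * a + p * (b + 1) := by ring
    have e3 : (1 + p) * a + 2 = p * a + (a + 2) := by ring
    rw [e2, e3] at h
    have h4 : a + 2 ≤ p * (b + 1) := Nat.le_of_add_le_add_left h
    calc a + 1 ≤ a + 2 := by omega
      _ ≤ p * (b + 1) := h4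
      _ = (b + 1) * p := Nat.mul_comm _ _
  have hrec : n.choose (a + 1) * p ^ (a + 1) * (a + 1)
      = n.choose a * p ^ a * ((n - a) * p) := by
    rw [pow_succ]
    calc n.choose (a + 1) * (p ^ a * p) * (a + 1)
        = n.choose (a + 1) * (a + 1) * (p ^ a * p) := by ring
      _ = n.choose a * (n - a) * (p ^ a * p) := by rw [Nat.choose_succ_right_eq]
      _ = n.choose a * p ^ a * ((n - a) * p) := by ring
  have hle : n.choose a * p ^ a * (a + 1) ≤ n.choose (a + 1) * p ^ (a + 1) * (a + 1) := by
    rw [hrec]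
    exact Nat.mul_le_mul_left _ key
  exact Nat.le_of_mul_le_mul_right hle (Nat.succ_pos a)

/-- The weight-enumerator term `C(n,w)(q-1)^w` is maximized at
`m = ⌈((q-1)n - 1)/q⌉`. -/
lemma term_le_max (q n : ℕ) (hq : 2 ≤ q) (w : ℕ) :
    n.choose w * (q - 1) ^ w ≤
      n.choose ⌈(((q : ℝ) - 1) * n - 1) / q⌉₊ *
        (q - 1) ^ ⌈(((q : ℝ) - 1) * n - 1) / q⌉₊ := by
  set m := ⌈(((q : ℝ) - 1) * n - 1) / q⌉₊ with hm
  have hqR : (0 : ℝ) < q := by positivity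
  have hcast : ((q - 1 : ℕ) : ℝ) = (q : ℝ) - 1 := by
    push_cast [Nat.cast_sub (by omega : 1 ≤ q)]; ring
  have up : ∀ d w, w + d = m → n.choose w * (q - 1) ^ w ≤ n.choose m * (q - 1) ^ m := by
    intro d
    induction d with
    | zero => intro w hw; simp only [Nat.add_zero] at hw; subst hw; exact le_refl _
    | succ d ih =>
      intro w hw
      have hwm : w < m := by omega
      have hreal : (w : ℝ) < (((q : ℝ) - 1) * n - 1) / q := Nat.lt_ceil.mp hwm
      have hreal2 : (q : ℝ) * w + 1 < ((q : ℝ) - 1) * n := by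
        rw [lt_div_iff₀ hqR] at hreal
        nlinarith
      have hnat : q * w + 2 ≤ (q - 1) * n := by
        have hc : ((q * w + 1 : ℕ) : ℝ) < (((q - 1) * n : ℕ) : ℝ) := by
          push_cast [hcast]
          linarith
        have := Nat.cast_lt.mp hc
        omega
      calc n.choose w * (q - 1) ^ w ≤ n.choose (w + 1) * (q - 1) ^ (w + 1) :=
            term_step_up q n w hq hnat
        _ ≤ n.choose m * (q - 1) ^ m := ih (w + 1) (by omega)
  have down : ∀ d w, w = m + d → n.choose w * (q - 1) ^ w ≤ n.choose m * (q - 1) ^ m := by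
    intro d
    induction d with
    | zero => intro w hw; simp only [Nat.add_zero] at hw; subst hw; exact le_refl _
    | succ d ih =>
      intro w hw
      have hwm : m ≤ m + d := by omega
      have hreal : (((q : ℝ) - 1) * n - 1) / q ≤ ((m + d : ℕ) : ℝ) := by
        exact_mod_cast Nat.ceil_le.mp hwm
      have hreal2 : ((q : ℝ) - 1) * n ≤ (q : ℝ) * ((m + d : ℕ) : ℝ) + 1 := by
        rw [div_le_iff₀ hqR] at hreal
        nlinarith
      have hnat : (q - 1) * n ≤ q * (m + d) + 1 := by
        have hc : (((q - 1) * n : ℕ) : ℝ) ≤ ((q * (m + d) + 1 : ℕ) : ℝ) := by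
          push_cast [hcast]
          push_cast at hreal2
          linarith
        exact Nat.cast_le.mp hc
      subst hw
      calc n.choose (m + d + 1) * (q - 1) ^ (m + d + 1)
          ≤ n.choose (m + d) * (q - 1) ^ (m + d) := term_step_down q n (m + d) hnat
        _ ≤ n.choose m * (q - 1) ^ m := ih (m + d) rfl
  rcases le_or_gt w m with h | h
  · exact up (m - w) w (by omega)
  · exact down (w - m) w (by omega)

/-- Monotonicity of `logb` transferred to the natural-number terms. -/
lemma logb_term_le (q n w : ℕ) (hq : 2 ≤ q) (hw : w ≤ n) :
    Real.logb q ((n.choose w * (q - 1) ^ w : ℕ) : ℝ) ≤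
      Real.logb q ((n.choose ⌈(((q : ℝ) - 1) * n - 1) / q⌉₊ *
        (q - 1) ^ ⌈(((q : ℝ) - 1) * n - 1) / q⌉₊ : ℕ) : ℝ) := by
  have hb : (1 : ℝ) < q := by exact_mod_cast hq.trans_lt' one_lt_two
  have hpos : 0 < n.choose w * (q - 1) ^ w :=
    Nat.mul_pos (Nat.choose_pos hw) (Nat.pow_pos (by omega))
  exact Real.logb_le_logb_of_le hb (by exact_mod_cast hpos)
    (by exact_mod_cast term_le_max q n hq w)

/-- upper bound on the entropy distance of a linear encoder:
Let `F` be a finite field with `q` elements, `k ≥ 1`, `n ≥ 1`, and let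
`f : F^k → F^n` be a linear map of full rank (`rank(f) = min(k,n)`). If `q = 2`, then
some nonzero `x ∈ F^k` has `ew_k(x) + ew_n(f(x)) ≤ log_2(binom(n, ⌈(n−1)/2⌉))`. If
`q ≥ 3`, then some nonzero `x ∈ F^k` has
`ew_k(x) + ew_n(f(x)) ≤ log_q(k·(q-1)) + log_q(binom(n,m)·(q-1)^m)` where
`m = ⌈((q-1)·n − 1)/q⌉`. Here `ew_m(x) = log_q(binom(m, wt(x))·(q-1)^{wt(x)})`. -/
theorem encoder_entropy_distance_upper_bound
    (F : Type*) [Field F] [Fintype F] [DecidableEq F] (q k n : ℕ)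
    (hq : Fintype.card F = q) (hk : 1 ≤ k) (hn : 1 ≤ n)
    (f : (Fin k → F) →ₗ[F] (Fin n → F))
    (hf : Module.finrank F (LinearMap.range f) = min k n) :
    (q = 2 → ∃ x : Fin k → F, x ≠ 0 ∧
      Real.logb q ((k.choose (hammingNorm x) * (q - 1) ^ hammingNorm x : ℕ) : ℝ) +
        Real.logb q
          ((n.choose (hammingNorm (f x)) * (q - 1) ^ hammingNorm (f x) : ℕ) : ℝ) ≤
      Real.logb 2 ((n.choose ⌈((n : ℝ) - 1) / 2⌉₊ : ℕ) : ℝ)) ∧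
    (3 ≤ q → ∃ x : Fin k → F, x ≠ 0 ∧
      Real.logb q ((k.choose (hammingNorm x) * (q - 1) ^ hammingNorm x : ℕ) : ℝ) +
        Real.logb q
          ((n.choose (hammingNorm (f x)) * (q - 1) ^ hammingNorm (f x) : ℕ) : ℝ) ≤
      Real.logb q ((k * (q - 1) : ℕ) : ℝ) +
        Real.logb q
          ((n.choose ⌈(((q : ℝ) - 1) * n - 1) / q⌉₊ *
              (q - 1) ^ ⌈(((q : ℝ) - 1) * n - 1) / q⌉₊ : ℕ) : ℝ)) := by
  constructor
  · -- q = 2 : take x the all-ones vector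
    intro h2
    subst h2
    refine ⟨fun _ => 1, ?_, ?_⟩
    · intro hcon
      exact one_ne_zero (congrFun hcon ⟨0, hk⟩)
    · have hwx : hammingNorm (fun _ : Fin k => (1 : F)) = k := by
        simp [hammingNorm, Finset.filter_true_of_mem]
      rw [hwx, Nat.choose_self]
      have h21 : (2 : ℕ) - 1 = 1 := rfl
      rw [h21]
      simp only [one_pow, mul_one, one_mul, Nat.cast_one, Real.logb_one, zero_add]
      set w := hammingNorm (f fun _ : Fin k => (1 : F)) with hwdef
      have hwle : w ≤ n := by
        simpa using hammingNorm_le_card_fintype (x := f fun _ : Fin k => (1 : F))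
      have hle := logb_term_le 2 n w (le_refl 2) hwle
      rw [h21] at hle
      simp only [one_pow, mul_one] at hle
      have hmeq : ⌈((((2 : ℕ) : ℝ) - 1) * n - 1) / ((2 : ℕ) : ℝ)⌉₊
          = ⌈((n : ℝ) - 1) / 2⌉₊ := by norm_num
      rw [hmeq] at hle
      exact_mod_cast hle
  · -- q ≥ 3 : take x a weight-one vector
    intro h3
    have hq2 : 2 ≤ q := by omega
    refine ⟨Pi.single ⟨0, hk⟩ (1 : F), ?_, ?_⟩
    · intro hcon
      have := congrFun hcon ⟨0, hk⟩
      rw [Pi.single_eq_same] at this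
      exact one_ne_zero this
    · have hwx : hammingNorm ((Pi.single (⟨0, hk⟩ : Fin k) (1 : F)) : Fin k → F) = 1 := by
        simp [hammingNorm, Pi.single_apply, Finset.filter_eq']
      rw [hwx, Nat.choose_one_right, pow_one]
      set w := hammingNorm (f (Pi.single (⟨0, hk⟩ : Fin k) (1 : F))) with hwdef
      have hwle : w ≤ n := by
        simpa using
          hammingNorm_le_card_fintype (x := f (Pi.single (⟨0, hk⟩ : Fin k) (1 : F)))
      have hle := logb_term_le q n w hq2 hwle
      linarith
end

section
/- Let F be a finite field with q elements, k ≥ 1, n ≥ 1, k′ = min(k,n), and let h be a real number such that Σ binom(k,i)·binom(n,j)·(q-1)^{i+j} < (q-1)·(q^n − q^{k′−1}), where the sum ranges over pairs (i,j) with 1 ≤ i ≤ k, j₀ ≤ j ≤ n (j₀ = 1 if k ≤ n and j₀ = 0 if k > n), and log_q(binom(k,i)(q-1)^i) + log_q(binom(n,j)(q-1)^j) < h. Then there exists a full-rank linear map f : F^k → F^n such that every nonzero x ∈ F^k satisfies ew_k(x) + ew_n(f(x)) ≥ h. -/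
open Finset

section Aux

variable {F : Type*} [Field F] [Fintype F] [DecidableEq F]

private lemma aux_card_nonzero : Fintype.card {a : F // a ≠ 0} = Fintype.card F - 1 := by
  classical
  have := Fintype.card_subtype_compl (fun a : F => a = 0)
  simpa [Fintype.card_subtype_eq] using this

/-- Number of vectors of Hamming weight `i` is at most `choose m i * (q-1)^i`. -/
private lemma card_wt_le (m i : ℕ) :
    #(univ.filter (fun x : Fin m → F => hammingNorm x = i))
      ≤ m.choose i * (Fintype.card F - 1) ^ i := by
  classical
  have hT : ((Finset.powersetCard i (univ : Finset (Fin m))).sigma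
      (fun s => (univ : Finset ({j // j ∈ s} → {a : F // a ≠ 0})))).card
      = m.choose i * (Fintype.card F - 1) ^ i := by
    rw [Finset.card_sigma]
    have hconst : ∀ s ∈ Finset.powersetCard i (univ : Finset (Fin m)),
        #(univ : Finset ({j // j ∈ s} → {a : F // a ≠ 0}))
          = (Fintype.card F - 1) ^ i := by
      intro s hs
      rw [Finset.card_univ, Fintype.card_fun, aux_card_nonzero, Fintype.card_coe,
        (Finset.mem_powersetCard.mp hs).2]
    rw [Finset.sum_congr rfl hconst, Finset.sum_const, Finset.card_powersetCard,
      Finset.card_univ, Fintype.card_fin, smul_eq_mul]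
  refine le_trans (Finset.card_le_card_of_injOn
    (fun x => ⟨univ.filter (fun j => x j ≠ 0),
      fun t => ⟨x t.1, (Finset.mem_filter.mp t.2).2⟩⟩) ?_ ?_) hT.le
  · intro x hx
    rw [Finset.mem_coe, Finset.mem_filter] at hx
    rw [Finset.mem_coe, Finset.mem_sigma]
    refine ⟨Finset.mem_powersetCard.mpr ⟨Finset.subset_univ _, ?_⟩, Finset.mem_univ _⟩
    exact hx.2
  · intro x hx y hy hxy
    funext j
    have hg := congrArg (fun p : Σ s : Finset (Fin m), ({j // j ∈ s} → {a : F // a ≠ 0}) =>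
        if hj : j ∈ p.1 then (p.2 ⟨j, hj⟩ : F) else 0) hxy
    simp only at hg
    have hx' : (if hj : j ∈ univ.filter (fun j => x j ≠ 0) then x j else 0) = x j := by
      by_cases hj : x j = 0 <;> simp [Finset.mem_filter, hj]
    have hy' : (if hj : j ∈ univ.filter (fun j => y j ≠ 0) then y j else 0) = y j := by
      by_cases hj : y j = 0 <;> simp [Finset.mem_filter, hj]
    rw [hx', hy'] at hg
    exact hg

/-- Any nonzero vector can be mapped to any other nonzero vector by a linear automorphism. -/
private lemma exists_linearEquiv_apply_eq {V : Type*} [AddCommGroup V] [Module F V]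
    [FiniteDimensional F V] {x y : V} (hx : x ≠ 0) (hy : y ≠ 0) :
    ∃ e : V ≃ₗ[F] V, e x = y := by
  classical
  have lix := LinearIndepOn.singleton (R := F) (v := id) hx
  have liy := LinearIndepOn.singleton (R := F) (v := id) hy
  let bx := Module.Basis.extend lix
  let by' := Module.Basis.extend liy
  have hxmem : x ∈ lix.extend (Set.subset_univ _) := lix.subset_extend _ rfl
  have hymem : y ∈ liy.extend (Set.subset_univ _) := liy.subset_extend _ rfl
  let σ0 := bx.indexEquiv by'
  let σ := σ0.trans (Equiv.swap (σ0 ⟨x, hxmem⟩) ⟨y, hymem⟩)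
  refine ⟨bx.equiv by' σ, ?_⟩
  have h1 : bx ⟨x, hxmem⟩ = x := Module.Basis.extend_apply_self lix ⟨x, hxmem⟩
  have h2 : by' ⟨y, hymem⟩ = y := Module.Basis.extend_apply_self liy ⟨y, hymem⟩
  calc (bx.equiv by' σ) x = (bx.equiv by' σ) (bx ⟨x, hxmem⟩) := by rw [h1]
    _ = by' (σ ⟨x, hxmem⟩) := bx.equiv_apply _ by' σ
    _ = y := by
        show by' ((Equiv.swap (σ0 ⟨x, hxmem⟩) ⟨y, hymem⟩) (σ0 ⟨x, hxmem⟩)) = y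
        rw [Equiv.swap_apply_left, h2]

variable (k n : ℕ)

/-- Rank is preserved by composing with linear automorphisms on both sides. -/
private lemma rank_comp_equiv (e : (Fin k → F) ≃ₗ[F] (Fin k → F))
    (g : (Fin n → F) ≃ₗ[F] (Fin n → F)) (f : (Fin k → F) →ₗ[F] (Fin n → F)) :
    Module.finrank F (LinearMap.range ((g : (Fin n → F) →ₗ[F] (Fin n → F)).comp
      (f.comp (e : (Fin k → F) →ₗ[F] (Fin k → F)))))
      = Module.finrank F (LinearMap.range f) := by
  have h1 : LinearMap.range (f.comp (e : (Fin k → F) →ₗ[F] (Fin k → F)))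
      = LinearMap.range f := LinearMap.range_comp_of_range_eq_top f e.range
  rw [LinearMap.range_comp, h1]
  exact g.finrank_map_eq _

/-- Full rank with `k ≤ n` means injective. -/
private lemma fr_inj (hkn : k ≤ n) {f : (Fin k → F) →ₗ[F] (Fin n → F)}
    (hf : Module.finrank F (LinearMap.range f) = min k n) : Function.Injective f := by
  rw [← LinearMap.ker_eq_bot, ← Submodule.finrank_eq_zero]
  have := LinearMap.finrank_range_add_finrank_ker f
  rw [hf, Module.finrank_fin_fun, Nat.min_eq_left hkn] at this
  omega

/-- There exists a full-rank map. -/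
private lemma exists_fr : ∃ f : (Fin k → F) →ₗ[F] (Fin n → F),
    Module.finrank F (LinearMap.range f) = min k n := by
  classical
  refine ⟨LinearMap.pi (fun j : Fin n =>
    if h : (j : ℕ) < k then LinearMap.proj (⟨j, h⟩ : Fin k) else 0), ?_⟩
  set f : (Fin k → F) →ₗ[F] (Fin n → F) := LinearMap.pi (fun j : Fin n =>
    if h : (j : ℕ) < k then LinearMap.proj (⟨j, h⟩ : Fin k) else 0) with hfdef
  have happ : ∀ (v : Fin k → F) (j : Fin n),
      f v j = if h : (j : ℕ) < k then v ⟨j, h⟩ else 0 := by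
    intro v j
    rw [hfdef, LinearMap.pi_apply]
    by_cases h : (j : ℕ) < k
    · rw [dif_pos h, dif_pos h]; rfl
    · rw [dif_neg h, dif_neg h]; rfl
  rcases le_or_gt k n with hkn | hnk
  · have hinj : Function.Injective f := by
      rw [← LinearMap.ker_eq_bot]
      rw [LinearMap.ker_eq_bot']
      intro v hv
      funext i
      have hi : (i : ℕ) < n := lt_of_lt_of_le i.2 hkn
      have := congrFun hv ⟨i, hi⟩
      rw [happ] at this
      rw [dif_pos (show ((⟨(i : ℕ), hi⟩ : Fin n) : ℕ) < k from i.2)] at this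
      simpa using this
    rw [LinearMap.finrank_range_of_inj hinj, Module.finrank_fin_fun, Nat.min_eq_left hkn]
  · have hsurj : LinearMap.range f = ⊤ := by
      rw [Submodule.eq_top_iff']
      intro w
      refine ⟨fun i => if h : (i : ℕ) < n then w ⟨i, h⟩ else 0, ?_⟩
      funext j
      have hj : (j : ℕ) < k := lt_of_lt_of_le j.2 hnk.le
      rw [happ, dif_pos hj, dif_pos j.2]
    rw [hsurj]
    rw [finrank_top, Module.finrank_fin_fun, Nat.min_eq_right hnk.le]

/-- Fibers of the evaluation map over nonzero points all have the same cardinality. -/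
private lemma fib_card_eq {x x' : Fin k → F} {y y' : Fin n → F}
    (hx : x ≠ 0) (hx' : x' ≠ 0) (hy : y ≠ 0) (hy' : y' ≠ 0)
    [Fintype ((Fin k → F) →ₗ[F] (Fin n → F))] :
    #(univ.filter (fun f : (Fin k → F) →ₗ[F] (Fin n → F) =>
        Module.finrank F (LinearMap.range f) = min k n ∧ f x = y))
      = #(univ.filter (fun f : (Fin k → F) →ₗ[F] (Fin n → F) =>
        Module.finrank F (LinearMap.range f) = min k n ∧ f x' = y')) := by
  classical
  obtain ⟨e, he⟩ := exists_linearEquiv_apply_eq (F := F) hx' hx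
  obtain ⟨g, hg⟩ := exists_linearEquiv_apply_eq (F := F) hy hy'
  refine Finset.card_bij'
    (fun f _ => (g : (Fin n → F) →ₗ[F] (Fin n → F)).comp
      (f.comp (e : (Fin k → F) →ₗ[F] (Fin k → F))))
    (fun f _ => (g.symm : (Fin n → F) →ₗ[F] (Fin n → F)).comp
      (f.comp (e.symm : (Fin k → F) →ₗ[F] (Fin k → F)))) ?_ ?_ ?_ ?_
  · intro f hf
    rw [Finset.mem_filter] at hf ⊢
    refine ⟨Finset.mem_univ _, ?_, ?_⟩
    · rw [rank_comp_equiv]; exact hf.2.1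
    · show g (f (e x')) = y'
      rw [he, hf.2.2, hg]
  · intro f hf
    rw [Finset.mem_filter] at hf ⊢
    refine ⟨Finset.mem_univ _, ?_, ?_⟩
    · rw [rank_comp_equiv]; exact hf.2.1
    · show g.symm (f (e.symm x)) = y
      rw [← he, e.symm_apply_apply, hf.2.2, ← hg, g.symm_apply_apply]
  · intro f _
    ext v
    simp
  · intro f _
    ext v
    simp

/-- In the case `n < k`, the fiber over `0` is at most the fiber over any point. -/
private lemma fib_zero_le (hnk : n < k) {x : Fin k → F} (hx : x ≠ 0) (y : Fin n → F)
    [Fintype ((Fin k → F) →ₗ[F] (Fin n → F))] :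
    #(univ.filter (fun f : (Fin k → F) →ₗ[F] (Fin n → F) =>
        Module.finrank F (LinearMap.range f) = min k n ∧ f x = 0))
      ≤ #(univ.filter (fun f : (Fin k → F) →ₗ[F] (Fin n → F) =>
        Module.finrank F (LinearMap.range f) = min k n ∧ f x = y)) := by
  classical
  obtain ⟨i, hi⟩ : ∃ i, x i ≠ 0 := by
    by_contra hcon
    push_neg at hcon
    exact hx (funext hcon)
  set g : (Fin k → F) →ₗ[F] (Fin n → F) :=
    LinearMap.smulRight ((x i)⁻¹ • LinearMap.proj i) y with hgdef
  have hgapp : ∀ z : Fin k → F, g z = ((x i)⁻¹ * z i) • y := by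
    intro z; rfl
  have hgx : g x = y := by
    rw [hgapp, inv_mul_cancel₀ hi, one_smul]
  refine Finset.card_le_card_of_injOn (fun f => f + g) ?_ ?_
  · intro f hf
    rw [Finset.mem_coe, Finset.mem_filter] at hf
    rw [Finset.mem_coe, Finset.mem_filter]
    obtain ⟨-, hfr, hfx⟩ := hf
    have hrange : LinearMap.range f = ⊤ := by
      apply Submodule.eq_top_of_finrank_eq
      rw [hfr, Module.finrank_fin_fun, Nat.min_eq_right hnk.le]
    have hrange' : LinearMap.range (f + g) = ⊤ := by
      rw [Submodule.eq_top_iff']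
      intro w
      obtain ⟨z, hz⟩ : ∃ z, f z = w := by
        have : w ∈ LinearMap.range f := by rw [hrange]; trivial
        exact this
      refine ⟨z - ((x i)⁻¹ * z i) • x, ?_⟩
      have : (f + g) (z - ((x i)⁻¹ * z i) • x)
          = f z - ((x i)⁻¹ * z i) • f x + (g z - ((x i)⁻¹ * z i) • g x) := by
        simp only [LinearMap.add_apply, map_sub, map_smul, smul_add, smul_sub]
        abel
      rw [this, hfx, hgx, hgapp z, smul_zero, sub_zero, sub_self, add_zero, hz]
    refine ⟨Finset.mem_univ _, ?_, ?_⟩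
    · rw [hrange', finrank_top, Module.finrank_fin_fun, Nat.min_eq_right hnk.le]
    · rw [LinearMap.add_apply, hfx, hgx, zero_add]
  · intro f₁ _ f₂ _ hf
    simpa using hf

end Aux

open Classical in
/-- lower bound on the largest entropy distance of a linear encoder:
Let `F` be a finite field with `q` elements, `k ≥ 1`, `n ≥ 1`, `k′ = min(k,n)`, and let
`h` be real with `Σ binom(k,i)·binom(n,j)·(q-1)^{i+j} < (q-1)·(q^n − q^{k′−1})`, the sum
over pairs `(i,j)` with `1 ≤ i ≤ k`, `j₀ ≤ j ≤ n` (`j₀ = 1` if `k ≤ n`, else `j₀ = 0`),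
and `log_q(binom(k,i)(q-1)^i) + log_q(binom(n,j)(q-1)^j) < h`. Then there exists a
full-rank linear map `f : F^k → F^n` with `ew_k(x) + ew_n(f(x)) ≥ h` for every
nonzero `x ∈ F^k`. -/
theorem encoder_entropy_distance_lower_bound
    (F : Type*) [Field F] [Fintype F] [DecidableEq F] (q k n : ℕ)
    (hq : Fintype.card F = q) (hk : 1 ≤ k) (hn : 1 ≤ n) (h : ℝ)
    (hsum :
      (∑ p ∈ (Finset.range (k + 1) ×ˢ Finset.range (n + 1)).filter
          (fun p => 1 ≤ p.1 ∧ (if k ≤ n then 1 else 0) ≤ p.2 ∧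
            Real.logb q ((k.choose p.1 * (q - 1) ^ p.1 : ℕ) : ℝ) +
              Real.logb q ((n.choose p.2 * (q - 1) ^ p.2 : ℕ) : ℝ) < h),
          ((k.choose p.1 * n.choose p.2 * (q - 1) ^ (p.1 + p.2) : ℕ) : ℝ))
        < ((q : ℝ) - 1) * ((q : ℝ) ^ n - (q : ℝ) ^ (min k n - 1))) :
    ∃ f : (Fin k → F) →ₗ[F] (Fin n → F),
      Module.finrank F (LinearMap.range f) = min k n ∧
      ∀ x : Fin k → F, x ≠ 0 →
        h ≤ Real.logb q ((k.choose (hammingNorm x) * (q - 1) ^ hammingNorm x : ℕ) : ℝ) +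
          Real.logb q
            ((n.choose (hammingNorm (f x)) * (q - 1) ^ hammingNorm (f x) : ℕ) : ℝ) := by
  classical
  letI : Fintype ((Fin k → F) →ₗ[F] (Fin n → F)) :=
    Fintype.ofEquiv _ LinearMap.toMatrix'.toEquiv.symm
  have hq2 : 2 ≤ q := by
    rw [← hq]; exact Fintype.one_lt_card
  -- basic objects
  set P : ℕ → ℕ → Prop := fun i j =>
    Real.logb q ((k.choose i * (q - 1) ^ i : ℕ) : ℝ) +
      Real.logb q ((n.choose j * (q - 1) ^ j : ℕ) : ℝ) < h with hPdef
  set FR : ((Fin k → F) →ₗ[F] (Fin n → F)) → Prop := fun f =>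
    Module.finrank F (LinearMap.range f) = min k n with hFRdef
  set S : Finset ((Fin k → F) →ₗ[F] (Fin n → F)) := univ.filter FR with hSdef
  set Bad : Finset ((Fin k → F) →ₗ[F] (Fin n → F)) :=
    S.filter (fun f => ∃ x, x ≠ 0 ∧ P (hammingNorm x) (hammingNorm (f x))) with hBaddef
  set B : Finset ((Fin k → F) × (Fin n → F)) :=
    univ.filter (fun p => p.1 ≠ 0 ∧ (k ≤ n → p.2 ≠ 0) ∧
      P (hammingNorm p.1) (hammingNorm p.2)) with hBdef
  have hkne : Nonempty (Fin k) := ⟨⟨0, hk⟩⟩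
  have hnne : Nonempty (Fin n) := ⟨⟨0, hn⟩⟩
  set x1 : Fin k → F := fun _ => 1 with hx1def
  set y1 : Fin n → F := fun _ => 1 with hy1def
  have hx1 : x1 ≠ 0 := by
    intro hcon
    have h1 : x1 ⟨0, hk⟩ = 0 := by rw [hcon]; rfl
    rw [hx1def] at h1
    exact one_ne_zero h1
  have hy1 : y1 ≠ 0 := by
    intro hcon
    have h1 : y1 ⟨0, hn⟩ = 0 := by rw [hcon]; rfl
    rw [hy1def] at h1
    exact one_ne_zero h1
  set N : ℕ := #(univ.filter (fun f : (Fin k → F) →ₗ[F] (Fin n → F) =>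
      FR f ∧ f x1 = y1)) with hNdef
  -- fiber cardinalities over nonzero points equal N
  have hfib : ∀ {x : Fin k → F} {y : Fin n → F}, x ≠ 0 → y ≠ 0 →
      #(univ.filter (fun f : (Fin k → F) →ₗ[F] (Fin n → F) => FR f ∧ f x = y)) = N :=
    fun {x y} hx hy => fib_card_eq k n hx hx1 hy hy1
  -- fiber over zero (only possible when n < k) is at most N
  have hfib0 : ∀ {x : Fin k → F}, x ≠ 0 →
      #(univ.filter (fun f : (Fin k → F) →ₗ[F] (Fin n → F) => FR f ∧ f x = 0)) ≤ N := by
    intro x hx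
    rcases le_or_gt k n with hkn | hnk
    · have : (univ.filter (fun f : (Fin k → F) →ₗ[F] (Fin n → F) => FR f ∧ f x = 0)) = ∅ := by
        rw [Finset.eq_empty_iff_forall_notMem]
        intro f hf
        rw [Finset.mem_filter] at hf
        obtain ⟨-, hfr, hfx⟩ := hf
        exact hx ((fr_inj k n hkn hfr) (by rw [hfx, map_zero]))
      rw [this]
      exact Nat.zero_le N
    · exact le_trans (fib_zero_le k n hnk hx y1) (le_of_eq (hfib hx hy1))
  -- N is positive
  have hNpos : 0 < N := by
    obtain ⟨f0, hf0⟩ := exists_fr (F := F) k n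
    have hne : f0 ≠ 0 := by
      intro hcon
      rw [hcon] at hf0
      rw [LinearMap.range_zero, finrank_bot] at hf0
      have : 1 ≤ min k n := le_min hk hn
      omega
    obtain ⟨x0, hx0⟩ : ∃ x0, f0 x0 ≠ 0 := by
      by_contra hcon
      push_neg at hcon
      exact hne (LinearMap.ext hcon)
    have hx0ne : x0 ≠ 0 := by
      intro hcon
      rw [hcon, map_zero] at hx0
      exact hx0 rfl
    have : f0 ∈ univ.filter (fun f : (Fin k → F) →ₗ[F] (Fin n → F) => FR f ∧ f x0 = f0 x0) :=
      Finset.mem_filter.mpr ⟨Finset.mem_univ _, hf0, rfl⟩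
    have hcard := Finset.card_pos.mpr ⟨f0, this⟩
    rwa [hfib hx0ne hx0] at hcard
  -- disjoint fibers: (q^n - 1) * N ≤ #S
  have hdisjcard : (q ^ n - 1) * N ≤ #S := by
    set Ys : Finset (Fin n → F) := univ.filter (fun y => y ≠ 0) with hYsdef
    have hYscard : #Ys = q ^ n - 1 := by
      rw [hYsdef, Finset.filter_ne', Finset.card_erase_of_mem (Finset.mem_univ _),
        Finset.card_univ, Fintype.card_fun, hq, Fintype.card_fin]
    have hsub : Ys.biUnion (fun y => univ.filter
        (fun f : (Fin k → F) →ₗ[F] (Fin n → F) => FR f ∧ f x1 = y)) ⊆ S := by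
      intro f hf
      rw [Finset.mem_biUnion] at hf
      obtain ⟨y, -, hfy⟩ := hf
      rw [Finset.mem_filter] at hfy
      exact Finset.mem_filter.mpr ⟨Finset.mem_univ _, hfy.2.1⟩
    have hdisj : ∀ y ∈ Ys, ∀ y' ∈ Ys, y ≠ y' →
        Disjoint (univ.filter (fun f : (Fin k → F) →ₗ[F] (Fin n → F) => FR f ∧ f x1 = y))
          (univ.filter (fun f => FR f ∧ f x1 = y')) := by
      intro y _ y' _ hyy'
      rw [Finset.disjoint_left]
      intro f hf hf'
      rw [Finset.mem_filter] at hf hf'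
      exact hyy' (hf.2.2 ▸ hf'.2.2 ▸ rfl)
    calc (q ^ n - 1) * N = ∑ y ∈ Ys, N := by rw [Finset.sum_const, hYscard, smul_eq_mul]
      _ = ∑ y ∈ Ys, #(univ.filter
            (fun f : (Fin k → F) →ₗ[F] (Fin n → F) => FR f ∧ f x1 = y)) := by
          refine Finset.sum_congr rfl (fun y hy => ?_)
          rw [hfib hx1 (Finset.mem_filter.mp hy).2]
      _ = #(Ys.biUnion (fun y => univ.filter
            (fun f : (Fin k → F) →ₗ[F] (Fin n → F) => FR f ∧ f x1 = y))) :=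
          (Finset.card_biUnion hdisj).symm
      _ ≤ #S := Finset.card_le_card hsub
  -- double counting: (q-1) * #Bad ≤ N * #B
  have hdouble : (q - 1) * #Bad ≤ N * #B := by
    have key1 : ∀ f ∈ Bad, q - 1 ≤ #(B.filter (fun b => f b.1 = b.2)) := by
      intro f hf
      rw [hBaddef, Finset.mem_filter] at hf
      obtain ⟨hfS, x, hx0, hPx⟩ := hf
      have hfr : FR f := (Finset.mem_filter.mp hfS).2
      have hcards : #(univ.filter (fun c : F => c ≠ 0)) = q - 1 := by
        rw [Finset.filter_ne', Finset.card_erase_of_mem (Finset.mem_univ _),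
          Finset.card_univ, hq]
      rw [← hcards]
      refine Finset.card_le_card_of_injOn (fun c => (c • x, c • f x)) ?_ ?_
      · intro c hc
        rw [Finset.mem_coe, Finset.mem_filter] at hc
        have hc0 : c ≠ 0 := hc.2
        have hreg : ∀ i : Fin n, IsSMulRegular F c := fun _ => (isRegular_of_ne_zero hc0).left
        have hregk : ∀ i : Fin k, IsSMulRegular F c := fun _ => (isRegular_of_ne_zero hc0).left
        show (c • x, c • f x) ∈ B.filter (fun b => f b.1 = b.2)
        rw [Finset.mem_filter, hBdef, Finset.mem_filter]
        refine ⟨⟨Finset.mem_univ _, smul_ne_zero hc0 hx0, ?_, ?_⟩, ?_⟩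
        · intro hkn
          have hfx : f x ≠ 0 := by
            intro hcon
            exact hx0 ((fr_inj k n hkn hfr) (by rw [hcon, map_zero]))
          exact smul_ne_zero hc0 hfx
        · show P (hammingNorm (c • x)) (hammingNorm (c • f x))
          rw [hammingNorm_smul hregk, hammingNorm_smul hreg]
          exact hPx
        · show f (c • x) = c • f x
          rw [map_smul]
      · intro c hc c' hc' hcc'
        have h1 : c • x = c' • x := (Prod.ext_iff.mp hcc').1
        obtain ⟨i, hi⟩ : ∃ i, x i ≠ 0 := by
          by_contra hcon
          push_neg at hcon
          exact hx0 (funext hcon)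
        have := congrFun h1 i
        simp only [Pi.smul_apply, smul_eq_mul] at this
        exact mul_right_cancel₀ hi this
    have key2 : ∑ f ∈ S, #(B.filter (fun b => f b.1 = b.2))
        = ∑ b ∈ B, #(S.filter (fun f => f b.1 = b.2)) := by
      simp_rw [Finset.card_filter]
      exact Finset.sum_comm
    have key4 : ∀ b ∈ B, #(S.filter (fun f => f b.1 = b.2)) ≤ N := by
      intro b hb
      rw [hBdef, Finset.mem_filter] at hb
      obtain ⟨-, hb1, hb2, -⟩ := hb
      have hrw : S.filter (fun f => f b.1 = b.2)
          = univ.filter (fun f : (Fin k → F) →ₗ[F] (Fin n → F) => FR f ∧ f b.1 = b.2) := by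
        rw [hSdef, Finset.filter_filter]
      rw [hrw]
      by_cases hb2' : b.2 = 0
      · rw [hb2']
        exact hfib0 hb1
      · exact le_of_eq (hfib hb1 hb2')
    calc (q - 1) * #Bad = ∑ _f ∈ Bad, (q - 1) := by rw [Finset.sum_const, smul_eq_mul, mul_comm]
      _ ≤ ∑ f ∈ Bad, #(B.filter (fun b => f b.1 = b.2)) := Finset.sum_le_sum key1
      _ ≤ ∑ f ∈ S, #(B.filter (fun b => f b.1 = b.2)) :=
          Finset.sum_le_sum_of_subset (Finset.filter_subset _ _)
      _ = ∑ b ∈ B, #(S.filter (fun f => f b.1 = b.2)) := key2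
      _ ≤ ∑ _b ∈ B, N := Finset.sum_le_sum key4
      _ = N * #B := by rw [Finset.sum_const, smul_eq_mul, mul_comm]
  -- bound #B by the combinatorial sum
  set A : Finset (ℕ × ℕ) := (Finset.range (k + 1) ×ˢ Finset.range (n + 1)).filter
      (fun p => 1 ≤ p.1 ∧ (if k ≤ n then 1 else 0) ≤ p.2 ∧ P p.1 p.2) with hAdef
  have hBcard : #B ≤ ∑ p ∈ A, k.choose p.1 * n.choose p.2 * (q - 1) ^ (p.1 + p.2) := by
    have hmap : ∀ b ∈ B, (hammingNorm b.1, hammingNorm b.2) ∈ A := by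
      intro b hb
      rw [hBdef, Finset.mem_filter] at hb
      obtain ⟨-, hb1, hb2, hb3⟩ := hb
      rw [hAdef, Finset.mem_filter, Finset.mem_product, Finset.mem_range, Finset.mem_range]
      have hw1 : hammingNorm b.1 ≤ k := by
        have := hammingNorm_le_card_fintype (x := b.1)
        rwa [Fintype.card_fin] at this
      have hw2 : hammingNorm b.2 ≤ n := by
        have := hammingNorm_le_card_fintype (x := b.2)
        rwa [Fintype.card_fin] at this
      refine ⟨⟨by omega, by omega⟩, ?_, ?_, hb3⟩
      · exact hammingNorm_pos_iff.mpr hb1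
      · by_cases hkn : k ≤ n
        · simp only [hkn, if_true]
          exact hammingNorm_pos_iff.mpr (hb2 hkn)
        · simp only [hkn, if_false]
          exact Nat.zero_le _
    rw [Finset.card_eq_sum_card_fiberwise hmap]
    refine Finset.sum_le_sum (fun p _ => ?_)
    have hsub : B.filter (fun b => (hammingNorm b.1, hammingNorm b.2) = p)
        ⊆ (univ.filter (fun x : Fin k → F => hammingNorm x = p.1)) ×ˢ
          (univ.filter (fun y : Fin n → F => hammingNorm y = p.2)) := by
      intro b hb
      rw [Finset.mem_filter] at hb
      rw [Finset.mem_product, Finset.mem_filter, Finset.mem_filter]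
      have h1 := congrArg Prod.fst hb.2
      have h2 := congrArg Prod.snd hb.2
      exact ⟨⟨Finset.mem_univ _, h1⟩, ⟨Finset.mem_univ _, h2⟩⟩
    calc #(B.filter (fun b => (hammingNorm b.1, hammingNorm b.2) = p))
        ≤ #((univ.filter (fun x : Fin k → F => hammingNorm x = p.1)) ×ˢ
            (univ.filter (fun y : Fin n → F => hammingNorm y = p.2))) :=
          Finset.card_le_card hsub
      _ = #(univ.filter (fun x : Fin k → F => hammingNorm x = p.1)) *
            #(univ.filter (fun y : Fin n → F => hammingNorm y = p.2)) :=
          Finset.card_product _ _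
      _ ≤ (k.choose p.1 * (q - 1) ^ p.1) * (n.choose p.2 * (q - 1) ^ p.2) := by
          refine Nat.mul_le_mul ?_ ?_
          · have := card_wt_le (F := F) k p.1
            rwa [hq] at this
          · have := card_wt_le (F := F) n p.2
            rwa [hq] at this
      _ = k.choose p.1 * n.choose p.2 * (q - 1) ^ (p.1 + p.2) := by
          rw [pow_add]; ring
  -- convert the real hypothesis to a natural-number inequality
  have hsumN : ∑ p ∈ A, k.choose p.1 * n.choose p.2 * (q - 1) ^ (p.1 + p.2)
      < (q - 1) * (q ^ n - q ^ (min k n - 1)) := by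
    have hqle : q ^ (min k n - 1) ≤ q ^ n := by
      refine Nat.pow_le_pow_right (by omega) ?_
      have := Nat.min_le_right k n
      omega
    have e1 : ((q : ℝ) - 1) = ((q - 1 : ℕ) : ℝ) := by
      rw [Nat.cast_sub (by omega)]; norm_num
    have e2 : ((q : ℝ) ^ n - (q : ℝ) ^ (min k n - 1)) = ((q ^ n - q ^ (min k n - 1) : ℕ) : ℝ) := by
      rw [Nat.cast_sub hqle]; push_cast; ring
    rw [e1, e2, ← Nat.cast_mul] at hsum
    have hcast : (∑ p ∈ A, ((k.choose p.1 * n.choose p.2 * (q - 1) ^ (p.1 + p.2) : ℕ) : ℝ))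
        < (((q - 1) * (q ^ n - q ^ (min k n - 1)) : ℕ) : ℝ) := hsum
    rw [← Nat.cast_sum] at hcast
    exact_mod_cast hcast
  -- conclude #Bad < #S
  have hBadS : #Bad < #S := by
    have c1 : (q - 1) * #Bad ≤ N * #B := hdouble
    have c2 : N * #B ≤ N * ∑ p ∈ A, k.choose p.1 * n.choose p.2 * (q - 1) ^ (p.1 + p.2) :=
      Nat.mul_le_mul_left N hBcard
    have c3 : N * (∑ p ∈ A, k.choose p.1 * n.choose p.2 * (q - 1) ^ (p.1 + p.2))
        < N * ((q - 1) * (q ^ n - q ^ (min k n - 1))) :=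
      mul_lt_mul_of_pos_left hsumN hNpos
    have c4 : (q - 1) * (q ^ n - q ^ (min k n - 1)) ≤ (q - 1) * (q ^ n - 1) := by
      refine Nat.mul_le_mul_left _ ?_
      refine Nat.sub_le_sub_left ?_ _
      exact Nat.one_le_pow _ _ (by omega)
    have c5 : N * ((q - 1) * (q ^ n - 1)) = (q - 1) * ((q ^ n - 1) * N) := by ring
    have c6 : (q - 1) * ((q ^ n - 1) * N) ≤ (q - 1) * #S :=
      Nat.mul_le_mul_left _ hdisjcard
    have : (q - 1) * #Bad < (q - 1) * #S := by
      calc (q - 1) * #Bad ≤ N * #B := c1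
        _ ≤ _ := c2
        _ < N * ((q - 1) * (q ^ n - q ^ (min k n - 1))) := c3
        _ ≤ N * ((q - 1) * (q ^ n - 1)) := Nat.mul_le_mul_left N c4
        _ = (q - 1) * ((q ^ n - 1) * N) := c5
        _ ≤ (q - 1) * #S := c6
    exact lt_of_mul_lt_mul_left this (Nat.zero_le _)
  -- extract a good full-rank map
  have hgood : (S \ Bad).Nonempty := by
    rw [← Finset.card_pos, Finset.card_sdiff_of_subset (show Bad ⊆ S from Finset.filter_subset _ _)]
    omega
  obtain ⟨f, hf⟩ := hgood
  rw [Finset.mem_sdiff] at hf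
  obtain ⟨hfS, hfBad⟩ := hf
  have hfr : FR f := (Finset.mem_filter.mp hfS).2
  refine ⟨f, hfr, ?_⟩
  intro x hx
  by_contra hcon
  push_neg at hcon
  exact hfBad (Finset.mem_filter.mpr ⟨hfS, ⟨x, hx, hcon⟩⟩)
end
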